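/- arXiv:1412.4617 — 4 statements merged into one kernel-verified Lean document; each statement's English description precedes it below -/
import Mathlib

section
/- Let a = (a_1, ..., a_n) ∈ ℝ^n be a unit vector (a ∈ S^{n-1}), set a_0 := 0, and assume a_i ≠ a_j for every pair of distinct indices i, j ∈ {0, 1, ..., n}. Then for every t ∈ ℝ, the n-dimensional Lebesgue volume of the section Θ(a,t) := Δ ∩ {x ∈ ℝ^n : ⟨a, x⟩ ≤ t} equals (1/n!) · Σ_{i=0}^{n} (t - a_i)_+^n / ∏_{j ≠ i, 0 ≤ j ≤ n} (a_j - a_i). -/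
open MeasureTheory Finset Polynomial Pointwise


lemma leadingCoeff_lagrange_basis {ι : Type*} [DecidableEq ι] {s : Finset ι} {v : ι → ℝ}
    (hv : Set.InjOn v s) {i : ι} (hi : i ∈ s) :
    (Lagrange.basis s v i).leadingCoeff = ∏ j ∈ s.erase i, (v i - v j)⁻¹ := by
  rw [Lagrange.basis, leadingCoeff_prod]
  refine Finset.prod_congr rfl fun j hj => ?_
  have hij : v i ≠ v j := by
    rw [hv.ne_iff hi (mem_of_mem_erase hj)]
    exact (mem_erase.mp hj).1.symm
  rw [Lagrange.basisDivisor, leadingCoeff_mul, leadingCoeff_C, leadingCoeff_X_sub_C, mul_one]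

lemma lagrange_sum_inv {ι : Type*} [DecidableEq ι] {s : Finset ι} {v : ι → ℝ}
    (hv : Set.InjOn v s) (hs : 2 ≤ s.card) :
    ∑ i ∈ s, (∏ j ∈ s.erase i, (v i - v j))⁻¹ = 0 := by
  have hne : s.Nonempty := Finset.card_pos.mp (by omega)
  have h1 : Lagrange.interpolate s v 1 = 1 := Lagrange.interpolate_one hv hne
  have h2 := congrArg (fun p => Polynomial.coeff p (s.card - 1)) h1
  simp only [Lagrange.interpolate_apply, Pi.one_apply, map_one, one_mul,
    Polynomial.finset_sum_coeff] at h2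
  rw [Polynomial.coeff_one] at h2
  rw [if_neg (by omega : ¬ (s.card - 1 = 0))] at h2
  rw [← h2]
  refine Finset.sum_congr rfl fun i hi => ?_
  have hdeg : (Lagrange.basis s v i).natDegree = s.card - 1 := by
    have := Lagrange.degree_basis hv hi
    exact natDegree_eq_of_degree_eq_some this
  rw [← hdeg, ← Polynomial.leadingCoeff, leadingCoeff_lagrange_basis hv hi,
    ← Finset.prod_inv_distrib]


lemma hasDerivAt_maxpow (m : ℕ) (hm : 1 ≤ m) (x : ℝ) :
    HasDerivAt (fun y : ℝ => max y 0 ^ (m + 1)) ((m + 1) * max x 0 ^ m) x := by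
  rcases lt_trichotomy x 0 with hx | hx | hx
  · have h0 : max x 0 = 0 := max_eq_right hx.le
    rw [h0, zero_pow (by omega), mul_zero]
    have : HasDerivAt (fun _ : ℝ => (0:ℝ)) 0 x := hasDerivAt_const x 0
    refine this.congr_of_eventuallyEq ?_
    filter_upwards [eventually_lt_nhds hx] with y hy
    rw [max_eq_right hy.le, zero_pow (by omega)]
  · subst hx
    rw [max_self, zero_pow (by omega), mul_zero]
    rw [hasDerivAt_iff_isLittleO]
    have key : (fun y : ℝ => max y 0 ^ (m + 1)) =o[nhds 0] (fun y : ℝ => y) := by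
      calc (fun y : ℝ => max y 0 ^ (m + 1))
          =O[nhds 0] (fun y : ℝ => y ^ 2) := by
            rw [Asymptotics.isBigO_iff]
            refine ⟨1, ?_⟩
            have h1 : ∀ᶠ y : ℝ in nhds 0, |y| < 1 := by
              have hc : Continuous (fun y : ℝ => |y|) := continuous_abs
              have := hc.tendsto 0
              simp only [abs_zero] at this
              exact this.eventually (eventually_lt_nhds one_pos)
            filter_upwards [h1] with y hy
            rw [one_mul]
            have hmax : |max y 0| ≤ |y| := by
              rcases le_total y 0 with h | h
              · rw [max_eq_right h]; simp
              · rw [max_eq_left h]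
            calc |max y 0 ^ (m+1)| = |max y 0| ^ (m+1) := abs_pow _ _
              _ ≤ |y| ^ (m+1) := pow_le_pow_left₀ (abs_nonneg _) hmax _
              _ ≤ |y| ^ 2 := by
                  apply pow_le_pow_of_le_one (abs_nonneg _) hy.le; omega
              _ = |y ^ 2| := (abs_pow _ _).symm
        _ =o[nhds 0] (fun y : ℝ => y) := by
            simpa using Asymptotics.isLittleO_pow_id (n := 2) (by omega)
    simpa using key
  · have h0 : max x 0 = x := max_eq_left hx.le
    rw [h0]
    have : HasDerivAt (fun y : ℝ => y ^ (m + 1)) ((m+1) * x ^ m) x := by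
      simpa using hasDerivAt_pow (m+1) x
    refine this.congr_of_eventuallyEq ?_
    filter_upwards [eventually_gt_nhds hx] with y hy
    rw [max_eq_left hy.le]

lemma integral_maxpow (m : ℕ) (hm : 1 ≤ m) (c d : ℝ) (hd : d ≠ 0) :
    ∫ s in (0:ℝ)..1, max (c - d * s) 0 ^ m =
      (max c 0 ^ (m + 1) - max (c - d) 0 ^ (m + 1)) / ((m + 1) * d) := by
  have key : ∀ s : ℝ, HasDerivAt (fun u : ℝ => -(max (c - d * u) 0 ^ (m+1)) / ((m+1) * d))
      (max (c - d * s) 0 ^ m) s := by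
    intro s
    have hg : HasDerivAt (fun u : ℝ => c - d * u) (-d) s := by
      simpa using ((hasDerivAt_id s).const_mul d).const_sub c
    have hcomp := (hasDerivAt_maxpow m hm (c - d * s)).comp s hg
    have h2 := (hcomp.div_const ((m+1) * d)).neg
    have heq : (fun u : ℝ => -(max (c - d * u) 0 ^ (m+1)) / ((m+1) * d)) =
        fun x => -(((fun y : ℝ => max y 0 ^ (m + 1)) ∘ fun u : ℝ => c - d * u) x / ((m+1)*d)) := by
      ext u
      simp [Function.comp, neg_div]
    rw [heq]
    refine h2.congr_deriv ?_
    have hm1 : ((m : ℝ) + 1) ≠ 0 := by positivity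
    field_simp
  have hcont : Continuous (fun s : ℝ => max (c - d * s) 0 ^ m) := by fun_prop
  have hint := intervalIntegral.integral_eq_sub_of_hasDerivAt
      (f := fun u : ℝ => -(max (c - d * u) 0 ^ (m+1)) / ((m+1) * d))
      (fun s _ => key s) (hcont.intervalIntegrable 0 1)
  rw [hint]
  simp only [mul_one, mul_zero, sub_zero]
  ring


namespace SimplexSection

def Vset (n : ℕ) (A : Fin (n+1) → ℝ) (t : ℝ) : Set (Fin n → ℝ) :=
  {x | (∀ i, 0 ≤ x i) ∧ (∑ i, x i ≤ 1) ∧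
    A 0 * (1 - ∑ i, x i) + ∑ i, A i.succ * x i ≤ t}

noncomputable def Fml (n : ℕ) (A : Fin (n+1) → ℝ) (t : ℝ) : ℝ :=
  (1 / n.factorial) * ∑ i, max (t - A i) 0 ^ n / ∏ j ∈ univ.erase i, (A j - A i)

lemma isClosed_Vset (n : ℕ) (A : Fin (n+1) → ℝ) (t : ℝ) : IsClosed (Vset n A t) := by
  have h1 : IsClosed {x : Fin n → ℝ | ∀ i, 0 ≤ x i} := by
    have he : {x : Fin n → ℝ | ∀ i, 0 ≤ x i} = ⋂ i, {x : Fin n → ℝ | 0 ≤ x i} := by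
      ext x; simp
    rw [he]
    exact isClosed_iInter fun i => isClosed_le continuous_const (continuous_apply i)
  have h2 : IsClosed {x : Fin n → ℝ | ∑ i, x i ≤ 1} :=
    isClosed_le (by fun_prop) continuous_const
  have h3 : IsClosed {x : Fin n → ℝ |
      A 0 * (1 - ∑ i, x i) + ∑ i, A i.succ * x i ≤ t} :=
    isClosed_le (by fun_prop) continuous_const
  have he : Vset n A t = ({x : Fin n → ℝ | ∀ i, 0 ≤ x i} ∩ {x | ∑ i, x i ≤ 1}) ∩
      {x | A 0 * (1 - ∑ i, x i) + ∑ i, A i.succ * x i ≤ t} := by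
    ext x
    simp only [Vset, Set.mem_setOf_eq, Set.mem_inter_iff, and_assoc]
  rw [he]
  exact (h1.inter h2).inter h3

lemma measurableSet_Vset (n : ℕ) (A : Fin (n+1) → ℝ) (t : ℝ) :
    MeasurableSet (Vset n A t) := (isClosed_Vset n A t).measurableSet

lemma Vset_subset (n : ℕ) (A : Fin (n+1) → ℝ) (t : ℝ) :
    Vset n A t ⊆ Set.univ.pi fun _ : Fin n => Set.Icc (0:ℝ) 1 := by
  rintro x ⟨hx0, hx1, -⟩ i -
  refine ⟨hx0 i, ?_⟩
  exact le_trans (Finset.single_le_sum (fun j _ => hx0 j) (mem_univ i)) hx1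

lemma volume_Vset_le_one (n : ℕ) (A : Fin (n+1) → ℝ) (t : ℝ) :
    volume (Vset n A t) ≤ 1 := by
  refine le_trans (measure_mono (Vset_subset n A t)) ?_
  rw [volume_pi_pi]
  simp [Real.volume_Icc]

lemma volume_Vset_lt_top (n : ℕ) (A : Fin (n+1) → ℝ) (t : ℝ) :
    volume (Vset n A t) < ⊤ :=
  lt_of_le_of_lt (volume_Vset_le_one n A t) (by norm_num)


lemma Fml_one (A : Fin 2 → ℝ) (t : ℝ) :
    Fml 1 A t = max (t - A 0) 0 / (A 1 - A 0) + max (t - A 1) 0 / (A 0 - A 1) := by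
  have h0 : (univ : Finset (Fin 2)).erase 0 = {1} := by decide
  have h1 : (univ : Finset (Fin 2)).erase 1 = {0} := by decide
  simp [Fml, Fin.sum_univ_two, h0, h1]

lemma ofReal_eq_ofReal_max (x : ℝ) : ENNReal.ofReal x = ENNReal.ofReal (max x 0) := by
  rcases le_total 0 x with h | h
  · rw [max_eq_left h]
  · rw [max_eq_right h, ENNReal.ofReal_of_nonpos h, ENNReal.ofReal_zero]

lemma base_case (A : Fin 2 → ℝ) (hA : Function.Injective A) (t : ℝ) :
    0 ≤ Fml 1 A t ∧ volume (Vset 1 A t) = ENNReal.ofReal (Fml 1 A t) := by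
  set d := A 1 - A 0 with hd
  have hd0 : d ≠ 0 := sub_ne_zero.mpr (hA.ne (by decide))
  set B : Set ℝ := {u : ℝ | 0 ≤ u ∧ u ≤ 1 ∧ A 0 + d * u ≤ t} with hB
  have hVB : Vset 1 A t = (MeasurableEquiv.funUnique (Fin 1) ℝ) ⁻¹' B := by
    ext x
    simp only [Vset, Set.mem_setOf_eq, Set.mem_preimage, MeasurableEquiv.funUnique_apply,
      Fin.sum_univ_one, Fin.forall_fin_one, hB]
    have hdef : (default : Fin 1) = 0 := rfl
    have hs : (0 : Fin 1).succ = 1 := rfl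
    rw [hdef, hs]
    constructor
    · rintro ⟨h1, h2, h3⟩; exact ⟨h1, h2, by nlinarith [h3]⟩
    · rintro ⟨h1, h2, h3⟩; exact ⟨h1, h2, by nlinarith [h3]⟩
  have hBm : MeasurableSet B := by
    have : B = Set.Icc (0:ℝ) 1 ∩ {u | A 0 + d * u ≤ t} := by
      ext u; simp [hB, Set.mem_Icc, and_assoc]
    rw [this]
    exact measurableSet_Icc.inter
      ((isClosed_le (by fun_prop) continuous_const).measurableSet)
  have hvol : volume (Vset 1 A t) = volume B := by
    rw [hVB]
    exact (volume_preserving_funUnique (Fin 1) ℝ).measure_preimage hBm.nullMeasurableSet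
  have hFml : Fml 1 A t = max (t - A 0) 0 / d - max (t - A 1) 0 / d := by
    rw [Fml_one]
    have h : A 0 - A 1 = -d := by rw [hd]; ring
    rw [h, div_neg, hd]
    ring
  have hA1 : A 1 = A 0 + d := by rw [hd]; ring
  set r : ℝ := (t - A 0) / d with hr
  rcases lt_or_gt_of_ne hd0 with hneg | hpos
  · -- d < 0 : B = Icc (max 0 r) 1
    have hBI : B = Set.Icc (max 0 r) 1 := by
      ext u
      simp only [hB, Set.mem_setOf_eq, Set.mem_Icc, max_le_iff]
      constructor
      · rintro ⟨h1, h2, h3⟩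
        refine ⟨⟨h1, ?_⟩, h2⟩
        rw [hr, div_le_iff_of_neg hneg]; linarith
      · rintro ⟨⟨h1, h2⟩, h3⟩
        rw [hr, div_le_iff_of_neg hneg] at h2
        exact ⟨h1, h3, by linarith⟩
    have hkey : max (1 - max 0 r) 0 = Fml 1 A t := by
      rw [hFml]
      rcases le_total t (A 1) with h1 | h1
      · have e1 : max (t - A 1) 0 = 0 := max_eq_right (by linarith)
        have e2 : max (t - A 0) 0 = 0 := max_eq_right (by nlinarith)
        have hr1 : 1 ≤ r := by rw [hr, le_div_iff_of_neg hneg]; nlinarith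
        rw [e1, e2, max_eq_right (by linarith : (0:ℝ) ≤ r),
          max_eq_right (by linarith : 1 - r ≤ 0)]
        simp
      · rcases le_total t (A 0) with h2 | h2
        · have e1 : max (t - A 1) 0 = t - A 1 := max_eq_left (by linarith)
          have e2 : max (t - A 0) 0 = 0 := max_eq_right (by linarith)
          have hr0 : 0 ≤ r := by
            rw [hr, le_div_iff_of_neg hneg]; nlinarith
          have hr1 : r ≤ 1 := by rw [hr, div_le_one_of_neg hneg]; nlinarith
          rw [e1, e2, max_eq_right hr0, max_eq_left (by linarith : (0:ℝ) ≤ 1 - r), hr]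
          field_simp
          rw [hA1]; ring
        · have e1 : max (t - A 1) 0 = t - A 1 := max_eq_left (by nlinarith)
          have e2 : max (t - A 0) 0 = t - A 0 := max_eq_left (by linarith)
          have hr0 : r ≤ 0 := div_nonpos_of_nonneg_of_nonpos (by linarith) hneg.le
          rw [e1, e2, max_eq_left hr0, sub_zero, max_eq_left (by norm_num : (0:ℝ) ≤ 1)]
          rw [div_sub_div_same, hA1]
          field_simp
          ring
    constructor
    · rw [← hkey]; exact le_max_right _ _
    · rw [hvol, hBI, Real.volume_Icc, ← hkey, ofReal_eq_ofReal_max]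
  · -- d > 0 : B = Icc 0 (min 1 r)
    have hBI : B = Set.Icc 0 (min 1 r) := by
      ext u
      simp only [hB, Set.mem_setOf_eq, Set.mem_Icc, le_min_iff]
      constructor
      · rintro ⟨h1, h2, h3⟩
        refine ⟨h1, h2, ?_⟩
        rw [hr, le_div_iff₀ hpos]; linarith
      · rintro ⟨h1, h2, h3⟩
        rw [hr, le_div_iff₀ hpos] at h3
        exact ⟨h1, h2, by linarith⟩
    have hkey : max (min 1 r) 0 = Fml 1 A t := by
      rw [hFml]
      rcases le_total t (A 0) with h1 | h1
      · have e1 : max (t - A 0) 0 = 0 := max_eq_right (by linarith)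
        have e2 : max (t - A 1) 0 = 0 := max_eq_right (by nlinarith)
        have hr1 : r ≤ 0 := div_nonpos_of_nonpos_of_nonneg (by linarith) hpos.le
        rw [e1, e2, min_eq_right (by linarith : r ≤ 1), max_eq_right hr1]
        simp
      · rcases le_total t (A 1) with h2 | h2
        · have e1 : max (t - A 0) 0 = t - A 0 := max_eq_left (by linarith)
          have e2 : max (t - A 1) 0 = 0 := max_eq_right (by linarith)
          have hr0 : 0 ≤ r := div_nonneg (by linarith) hpos.le
          have hr1 : r ≤ 1 := by rw [hr, div_le_one hpos]; nlinarith
          rw [e1, e2, min_eq_right hr1, max_eq_left hr0, hr]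
          simp
        · have e1 : max (t - A 0) 0 = t - A 0 := max_eq_left (by nlinarith)
          have e2 : max (t - A 1) 0 = t - A 1 := max_eq_left (by linarith)
          have hr1 : 1 ≤ r := by rw [hr, le_div_iff₀ hpos]; nlinarith
          rw [e1, e2, min_eq_left hr1, max_eq_left (by norm_num : (0:ℝ) ≤ 1)]
          rw [div_sub_div_same, hA1]
          field_simp
          ring
    constructor
    · rw [← hkey]; exact le_max_right _ _
    · rw [hvol, hBI, Real.volume_Icc, sub_zero, ← hkey, ofReal_eq_ofReal_max]

lemma lagrange_sum_inv2 {ι : Type*} [DecidableEq ι] {s : Finset ι} {v : ι → ℝ}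
    (hv : Set.InjOn v s) (hs : 2 ≤ s.card) :
    ∑ i ∈ s, (∏ j ∈ s.erase i, (v j - v i))⁻¹ = 0 := by
  have h := lagrange_sum_inv hv hs
  have he : ∀ i ∈ s, (∏ j ∈ s.erase i, (v j - v i))⁻¹ =
      ((-1:ℝ)^(s.card - 1))⁻¹ * (∏ j ∈ s.erase i, (v i - v j))⁻¹ := by
    intro i hi
    have : ∏ j ∈ s.erase i, (v j - v i) =
        (-1:ℝ)^(s.card - 1) * ∏ j ∈ s.erase i, (v i - v j) := by
      rw [← Finset.card_erase_of_mem hi]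
      rw [← Finset.prod_const (-1:ℝ), ← Finset.prod_mul_distrib]
      exact Finset.prod_congr rfl fun j _ => by ring
    rw [this, mul_inv]
  rw [Finset.sum_congr rfl he, ← Finset.mul_sum, h, mul_zero]

lemma erase_castSucc_eq {n : ℕ} (i : Fin (n+1)) :
    (univ : Finset (Fin (n+2))).erase i.castSucc =
      insert (Fin.last (n+1)) ((univ.erase i).image Fin.castSucc) := by
  ext j
  simp only [mem_erase, mem_univ, and_true, mem_insert, mem_image]
  constructor
  · intro hj
    rcases Fin.eq_castSucc_or_eq_last j with ⟨k, rfl⟩ | rfl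
    · exact Or.inr ⟨k, fun hk => hj (congrArg Fin.castSucc hk), rfl⟩
    · exact Or.inl rfl
  · rintro (rfl | ⟨k, hk, rfl⟩)
    · exact (Fin.castSucc_lt_last i).ne'
    · simpa [Fin.castSucc_inj] using hk
  
lemma prod_erase_castSucc {n : ℕ} (g : Fin (n+2) → ℝ) (i : Fin (n+1)) :
    ∏ j ∈ univ.erase i.castSucc, g j =
      (∏ j ∈ univ.erase i, g j.castSucc) * g (Fin.last (n+1)) := by
  rw [erase_castSucc_eq, Finset.prod_insert, Finset.prod_image]
  · rw [mul_comm]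
  · intro a _ b _ hab; exact Fin.castSucc_injective _ hab
  · simp only [mem_image]
    rintro ⟨k, -, hk⟩
    exact (Fin.castSucc_lt_last k).ne hk

lemma erase_last_eq {n : ℕ} :
    (univ : Finset (Fin (n+2))).erase (Fin.last (n+1)) = univ.image Fin.castSucc := by
  ext j
  simp only [mem_erase, mem_univ, and_true, mem_image]
  constructor
  · intro hj
    rcases Fin.eq_castSucc_or_eq_last j with ⟨k, rfl⟩ | rfl
    · exact ⟨k, trivial, rfl⟩
    · exact absurd rfl hj
  · rintro ⟨k, -, rfl⟩
    exact (Fin.castSucc_lt_last k).ne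

lemma prod_erase_last {n : ℕ} (g : Fin (n+2) → ℝ) :
    ∏ j ∈ univ.erase (Fin.last (n+1)), g j = ∏ j : Fin (n+1), g j.castSucc := by
  rw [erase_last_eq, Finset.prod_image]
  intro a _ b _ hab; exact Fin.castSucc_injective _ hab

lemma snoc_mem_Vset_iff {n : ℕ} (A : Fin (n+2) → ℝ) (t : ℝ) (y : Fin n → ℝ) (s : ℝ) :
    (Fin.snoc y s ∈ Vset (n+1) A t) ↔
      ((∀ i, 0 ≤ y i) ∧ 0 ≤ s ∧ (∑ i, y i) + s ≤ 1 ∧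
        A 0 * (1 - ((∑ i, y i) + s)) +
          ((∑ i, A (i.succ.castSucc) * y i) + A (Fin.last (n+1)) * s) ≤ t) := by
  have hsum : ∑ i : Fin (n+1), (Fin.snoc y s : Fin (n+1) → ℝ) i = (∑ i, y i) + s := by
    rw [Fin.sum_univ_castSucc]
    simp [Fin.snoc_castSucc, Fin.snoc_last]
  have hsum2 : ∑ i : Fin (n+1), A i.succ * (Fin.snoc y s : Fin (n+1) → ℝ) i =
      (∑ i, A (i.succ.castSucc) * y i) + A (Fin.last (n+1)) * s := by
    rw [Fin.sum_univ_castSucc]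
    simp [Fin.snoc_castSucc, Fin.snoc_last, Fin.succ_last]
  constructor
  · rintro ⟨h1, h2, h3⟩
    refine ⟨fun i => by simpa [Fin.snoc_castSucc] using h1 i.castSucc,
      by simpa [Fin.snoc_last] using h1 (Fin.last n), ?_, ?_⟩
    · rw [← hsum]; exact h2
    · rw [← hsum, ← hsum2]; exact h3
  · rintro ⟨h1, h2, h3, h4⟩
    refine ⟨fun i => ?_, by rw [hsum]; exact h3, by rw [hsum, hsum2]; exact h4⟩
    rcases Fin.eq_castSucc_or_eq_last i with ⟨k, rfl⟩ | rfl
    · simpa [Fin.snoc_castSucc] using h1 k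
    · simpa [Fin.snoc_last] using h2

lemma slice_eq {n : ℕ} (A : Fin (n+2) → ℝ) (t : ℝ) {s : ℝ} (h0 : 0 ≤ s) (h1 : s < 1) :
    {y : Fin n → ℝ | Fin.snoc y s ∈ Vset (n+1) A t} =
      (1 - s) • Vset n (fun j => A j.castSucc) ((t - A (Fin.last (n+1)) * s) / (1 - s)) := by
  have hc : (0:ℝ) < 1 - s := by linarith
  set c := 1 - s with hcdef
  have hcne : c ≠ 0 := hc.ne'
  ext y
  rw [Set.mem_setOf_eq, snoc_mem_Vset_iff,
    Set.mem_smul_set_iff_inv_smul_mem₀ hcne]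
  simp only [Vset, Set.mem_setOf_eq, Pi.smul_apply, smul_eq_mul, Fin.castSucc_zero]
  have hs1 : ∑ i : Fin n, c⁻¹ * y i = c⁻¹ * ∑ i, y i := by
    rw [Finset.mul_sum]
  have hs2 : ∑ i : Fin n, A i.succ.castSucc * (c⁻¹ * y i) =
      c⁻¹ * ∑ i, A i.succ.castSucc * y i := by
    rw [Finset.mul_sum]; exact Finset.sum_congr rfl fun i _ => by ring
  rw [hs1, hs2]
  set S := ∑ i, y i
  set T := ∑ i, A i.succ.castSucc * y i
  set L := A (Fin.last (n+1))
  have key : ∀ u v : ℝ, c⁻¹ * u ≤ c⁻¹ * v ↔ u ≤ v := fun u v => by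
    constructor
    · intro h
      have := mul_le_mul_of_nonneg_left h hc.le
      rwa [← mul_assoc, mul_inv_cancel₀ hcne, one_mul, ← mul_assoc,
        mul_inv_cancel₀ hcne, one_mul] at this
    · intro h; exact mul_le_mul_of_nonneg_left h (inv_nonneg.mpr hc.le)
  have e1 : (∀ i, 0 ≤ c⁻¹ * y i) ↔ (∀ i, 0 ≤ y i) := by
    constructor
    · intro h i
      have := mul_le_mul_of_nonneg_left (h i) hc.le
      rwa [mul_zero, ← mul_assoc, mul_inv_cancel₀ hcne, one_mul] at this
    · intro h i; exact mul_nonneg (inv_nonneg.mpr hc.le) (h i)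
  have e2 : c⁻¹ * S ≤ 1 ↔ S + s ≤ 1 := by
    have h1' : (1:ℝ) = c⁻¹ * c := (inv_mul_cancel₀ hcne).symm
    rw [h1', key]
    constructor <;> intro h <;> [skip; skip] <;> rw [hcdef] at * <;> linarith
  have hrw : A 0 * (1 - c⁻¹ * S) + c⁻¹ * T = c⁻¹ * (A 0 * (c - S) + T) := by
    field_simp
  have hrw2 : (t - L * s) / c = c⁻¹ * (t - L * s) := div_eq_inv_mul _ _
  have e3 : A 0 * (1 - c⁻¹ * S) + c⁻¹ * T ≤ (t - L * s) / c ↔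
      A 0 * (1 - (S + s)) + (T + L * s) ≤ t := by
    rw [hrw, hrw2, key]
    have hq : A 0 * (c - S) = A 0 * (1 - (S + s)) := by rw [hcdef]; ring
    rw [hq]
    constructor <;> intro h <;> linarith
  constructor
  · rintro ⟨g1, g2, g3, g4⟩
    exact ⟨e1.mpr g1, e2.mpr g3, e3.mpr g4⟩
  · rintro ⟨g1, g2, g3⟩
    exact ⟨e1.mp g1, h0, e2.mp g2, e3.mp g3⟩

lemma slice_empty_neg {n : ℕ} (A : Fin (n+2) → ℝ) (t : ℝ) {s : ℝ} (hs : s < 0) :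
    {y : Fin n → ℝ | Fin.snoc y s ∈ Vset (n+1) A t} = ∅ := by
  ext y
  simp only [Set.mem_setOf_eq, snoc_mem_Vset_iff, Set.mem_empty_iff_false, iff_false]
  rintro ⟨-, h, -, -⟩
  linarith

lemma volume_slice_ge_one {n : ℕ} (hn : 1 ≤ n) (A : Fin (n+2) → ℝ) (t : ℝ) {s : ℝ}
    (hs : 1 ≤ s) :
    volume {y : Fin n → ℝ | Fin.snoc y s ∈ Vset (n+1) A t} = 0 := by
  have hsub : {y : Fin n → ℝ | Fin.snoc y s ∈ Vset (n+1) A t} ⊆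
      {(fun _ => 0 : Fin n → ℝ)} := by
    intro y hy
    rw [Set.mem_setOf_eq, snoc_mem_Vset_iff] at hy
    obtain ⟨h1, -, h3, -⟩ := hy
    have hsum : ∑ i, y i ≤ 0 := by linarith
    have hzero : ∑ i, y i = 0 :=
      le_antisymm hsum (Finset.sum_nonneg fun i _ => h1 i)
    have := (Finset.sum_eq_zero_iff_of_nonneg fun i _ => h1 i).mp hzero
    simp only [Set.mem_singleton_iff]
    ext i
    exact this i (mem_univ i)
  refine measure_mono_null hsub ?_
  have hset : ({(fun _ => 0 : Fin n → ℝ)} : Set (Fin n → ℝ)) =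
      Set.univ.pi fun _ => ({0} : Set ℝ) := by
    ext y; simp [funext_iff]
  rw [hset, volume_pi_pi]
  simp only [Real.volume_singleton, Finset.prod_const]
  rw [Finset.card_univ, Fintype.card_fin, zero_pow (by omega)]

lemma volume_Vset_succ {n : ℕ} (A : Fin (n+2) → ℝ) (t : ℝ) :
    volume (Vset (n+1) A t) =
      ∫⁻ s : ℝ, volume {y : Fin n → ℝ | Fin.snoc y s ∈ Vset (n+1) A t} := by
  set e := MeasurableEquiv.piFinSuccAbove (fun _ : Fin (n+1) => ℝ) (Fin.last n) with he
  have hmp : MeasurePreserving (⇑e.symm) volume volume :=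
    (volume_preserving_piFinSuccAbove (fun _ : Fin (n+1) => ℝ) (Fin.last n)).symm e
  have hmeas := measurableSet_Vset (n+1) A t
  have h1 : volume (Vset (n+1) A t) = volume (e.symm ⁻¹' (Vset (n+1) A t)) :=
    (hmp.measure_preimage hmeas.nullMeasurableSet).symm
  rw [h1, Measure.volume_eq_prod, Measure.prod_apply (e.symm.measurable hmeas)]
  refine lintegral_congr fun s => ?_
  congr 1
  ext y
  simp only [Set.mem_preimage, Set.mem_setOf_eq, he,
    MeasurableEquiv.piFinSuccAbove_symm_apply]
  have : (Fin.insertNthEquiv (fun _ : Fin (n+1) => ℝ) (Fin.last n)) (s, y) =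
      Fin.snoc y s := by
    simp [Fin.insertNthEquiv_apply, Fin.insertNth_last', Fin.snocEquiv]
  rw [this]

lemma step_formula {n : ℕ} (hn : 1 ≤ n) (A : Fin (n+2) → ℝ) (hA : Function.Injective A)
    (t : ℝ) :
    (∫ s in (0:ℝ)..1, ((1 / n.factorial : ℝ) *
        ∑ i : Fin (n+1),
          max ((t - A i.castSucc) - (A (Fin.last (n+1)) - A i.castSucc) * s) 0 ^ n /
            ∏ j ∈ univ.erase i, (A j.castSucc - A i.castSucc)))
      = Fml (n+1) A t := by
  have hd : ∀ i : Fin (n+1), A (Fin.last (n+1)) - A i.castSucc ≠ 0 := fun i =>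
    sub_ne_zero.mpr (hA.ne (Fin.castSucc_lt_last i).ne')
  have hP : ∀ i : Fin (n+1),
      (∏ j ∈ univ.erase i, (A j.castSucc - A i.castSucc)) ≠ 0 := by
    intro i
    refine Finset.prod_ne_zero_iff.mpr fun j hj => sub_ne_zero.mpr fun hc => ?_
    exact (mem_erase.mp hj).1 (Fin.castSucc_injective _ (hA hc))
  have hQ : (∏ j : Fin (n+1), (A j.castSucc - A (Fin.last (n+1)))) ≠ 0 := by
    refine Finset.prod_ne_zero_iff.mpr fun j _ => sub_ne_zero.mpr fun hc => ?_
    exact (Fin.castSucc_lt_last j).ne (hA hc)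
  have hcast : ∀ i : Fin (n+1),
      (∏ j ∈ (univ : Finset (Fin (n+2))).erase i.castSucc, (A j - A i.castSucc)) =
        (∏ j ∈ univ.erase i, (A j.castSucc - A i.castSucc)) *
          (A (Fin.last (n+1)) - A i.castSucc) :=
    fun i => prod_erase_castSucc (fun j => A j - A i.castSucc) i
  have hlast : (∏ j ∈ (univ : Finset (Fin (n+2))).erase (Fin.last (n+1)),
      (A j - A (Fin.last (n+1)))) =
      ∏ j : Fin (n+1), (A j.castSucc - A (Fin.last (n+1))) :=
    prod_erase_last _
  have hlag0 := lagrange_sum_inv2 (v := A) (s := univ) hA.injOn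
    (by rw [card_univ, Fintype.card_fin]; omega)
  rw [Fin.sum_univ_castSucc, hlast] at hlag0
  have hsumlag : ∑ i : Fin (n+1),
      ((∏ j ∈ univ.erase i, (A j.castSucc - A i.castSucc)) *
        (A (Fin.last (n+1)) - A i.castSucc))⁻¹ =
      -(∏ j : Fin (n+1), (A j.castSucc - A (Fin.last (n+1))))⁻¹ := by
    have : ∑ i : Fin (n+1),
        ((∏ j ∈ univ.erase i, (A j.castSucc - A i.castSucc)) *
          (A (Fin.last (n+1)) - A i.castSucc))⁻¹ =
        ∑ i : Fin (n+1),
          (∏ j ∈ (univ : Finset (Fin (n+2))).erase i.castSucc, (A j - A i.castSucc))⁻¹ :=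
      Finset.sum_congr rfl fun i _ => by rw [hcast i]
    rw [this]
    linarith [hlag0]
  -- compute the integral
  rw [intervalIntegral.integral_const_mul,
    intervalIntegral.integral_finset_sum (fun i _ =>
      (Continuous.intervalIntegrable (by fun_prop) 0 1))]
  have hint : ∀ i ∈ (univ : Finset (Fin (n+1))),
      (∫ s in (0:ℝ)..1, max ((t - A i.castSucc) -
          (A (Fin.last (n+1)) - A i.castSucc) * s) 0 ^ n /
          ∏ j ∈ univ.erase i, (A j.castSucc - A i.castSucc)) =
        ((max (t - A i.castSucc) 0 ^ (n+1) - max (t - A (Fin.last (n+1))) 0 ^ (n+1)) /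
            (((n:ℝ) + 1) * (A (Fin.last (n+1)) - A i.castSucc))) /
          ∏ j ∈ univ.erase i, (A j.castSucc - A i.castSucc) := by
    intro i _
    rw [intervalIntegral.integral_div,
      integral_maxpow n hn (t - A i.castSucc) (A (Fin.last (n+1)) - A i.castSucc) (hd i)]
    have he : (t - A i.castSucc) - (A (Fin.last (n+1)) - A i.castSucc) =
        t - A (Fin.last (n+1)) := by ring
    rw [he]
  rw [Finset.sum_congr rfl hint]
  -- expand the target
  simp only [Fml]
  conv_rhs => rw [Fin.sum_univ_castSucc]
  rw [hlast]
  have hrw2 : ∀ i ∈ (univ : Finset (Fin (n+1))),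
      max (t - A i.castSucc) 0 ^ (n+1) /
        (∏ j ∈ (univ : Finset (Fin (n+2))).erase i.castSucc, (A j - A i.castSucc)) =
      max (t - A i.castSucc) 0 ^ (n+1) /
        ((∏ j ∈ univ.erase i, (A j.castSucc - A i.castSucc)) *
          (A (Fin.last (n+1)) - A i.castSucc)) := by
    intro i _
    rw [hcast i]
  rw [Finset.sum_congr rfl hrw2]
  -- per-term algebraic rewrite
  have hterm : ∀ i ∈ (univ : Finset (Fin (n+1))),
      ((max (t - A i.castSucc) 0 ^ (n+1) - max (t - A (Fin.last (n+1))) 0 ^ (n+1)) /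
          (((n:ℝ) + 1) * (A (Fin.last (n+1)) - A i.castSucc))) /
        ∏ j ∈ univ.erase i, (A j.castSucc - A i.castSucc) =
      (1/((n:ℝ)+1)) * (max (t - A i.castSucc) 0 ^ (n+1) /
          ((∏ j ∈ univ.erase i, (A j.castSucc - A i.castSucc)) *
            (A (Fin.last (n+1)) - A i.castSucc))) -
      (1/((n:ℝ)+1)) * (max (t - A (Fin.last (n+1))) 0 ^ (n+1) *
          ((∏ j ∈ univ.erase i, (A j.castSucc - A i.castSucc)) *
            (A (Fin.last (n+1)) - A i.castSucc))⁻¹) := by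
    intro i _
    have h1 := hP i
    have h2 := hd i
    have h3 : ((n:ℝ) + 1) ≠ 0 := by positivity
    field_simp
  rw [Finset.sum_congr rfl hterm, Finset.sum_sub_distrib, ← Finset.mul_sum, ← Finset.mul_sum,
    ← Finset.mul_sum, hsumlag]
  have hfac : (((n+1).factorial : ℝ)) = ((n:ℝ) + 1) * (n.factorial : ℝ) := by
    rw [Nat.factorial_succ]; push_cast; ring
  rw [hfac]
  have h3 : ((n:ℝ) + 1) ≠ 0 := by positivity
  have h4 : ((n.factorial : ℝ)) ≠ 0 := Nat.cast_ne_zero.mpr n.factorial_ne_zero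
  field_simp
  ring

lemma step {n : ℕ} (hn : 1 ≤ n)
    (IH : ∀ (B : Fin (n+1) → ℝ), Function.Injective B → ∀ t,
      0 ≤ Fml n B t ∧ volume (Vset n B t) = ENNReal.ofReal (Fml n B t))
    (A : Fin (n+2) → ℝ) (hA : Function.Injective A) (t : ℝ) :
    0 ≤ Fml (n+1) A t ∧ volume (Vset (n+1) A t) = ENNReal.ofReal (Fml (n+1) A t) := by
  have hBinj : Function.Injective (fun j : Fin (n+1) => A j.castSucc) :=
    fun i j h => Fin.castSucc_injective _ (hA h)
  have hcont : Continuous (fun s : ℝ => (1 / n.factorial : ℝ) *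
      ∑ i : Fin (n+1),
        max ((t - A i.castSucc) - (A (Fin.last (n+1)) - A i.castSucc) * s) 0 ^ n /
          ∏ j ∈ univ.erase i, (A j.castSucc - A i.castSucc)) := by
    refine continuous_const.mul (continuous_finset_sum _ fun i _ => ?_)
    exact ((Continuous.max (by fun_prop) continuous_const).pow n).div_const _
  have hpoint : ∀ s ∈ Set.Ico (0:ℝ) 1,
      volume {y : Fin n → ℝ | Fin.snoc y s ∈ Vset (n+1) A t} =
        ENNReal.ofReal ((1 / n.factorial : ℝ) *
          ∑ i : Fin (n+1),
            max ((t - A i.castSucc) - (A (Fin.last (n+1)) - A i.castSucc) * s) 0 ^ n /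
              ∏ j ∈ univ.erase i, (A j.castSucc - A i.castSucc))
        ∧ 0 ≤ (1 / n.factorial : ℝ) *
          ∑ i : Fin (n+1),
            max ((t - A i.castSucc) - (A (Fin.last (n+1)) - A i.castSucc) * s) 0 ^ n /
              ∏ j ∈ univ.erase i, (A j.castSucc - A i.castSucc) := by
    rintro s ⟨h0, h1⟩
    have hc : (0:ℝ) < 1 - s := by linarith
    obtain ⟨ih1, ih2⟩ := IH (fun j => A j.castSucc) hBinj
      ((t - A (Fin.last (n+1)) * s) / (1 - s))
    have hslice := slice_eq A t h0 h1
    have hsmul : volume ((1 - s) • Vset n (fun j => A j.castSucc)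
        ((t - A (Fin.last (n+1)) * s) / (1 - s))) =
        ENNReal.ofReal ((1-s)^n) *
          volume (Vset n (fun j => A j.castSucc)
            ((t - A (Fin.last (n+1)) * s) / (1 - s))) := by
      rw [Measure.addHaar_smul]
      congr 2
      rw [Module.finrank_fin_fun]
      exact abs_of_nonneg (pow_nonneg hc.le n)
    have hfml : (1-s)^n * Fml n (fun j => A j.castSucc)
        ((t - A (Fin.last (n+1)) * s) / (1 - s)) =
        (1 / n.factorial : ℝ) *
          ∑ i : Fin (n+1),
            max ((t - A i.castSucc) - (A (Fin.last (n+1)) - A i.castSucc) * s) 0 ^ n /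
              ∏ j ∈ univ.erase i, (A j.castSucc - A i.castSucc) := by
      simp only [Fml]
      rw [mul_left_comm]
      congr 1
      rw [Finset.mul_sum]
      refine Finset.sum_congr rfl fun i _ => ?_
      rw [← mul_div_assoc]
      congr 1
      rw [← mul_pow]
      congr 1
      rw [mul_max_of_nonneg _ _ hc.le, mul_zero]
      congr 1
      field_simp
      ring
    refine ⟨?_, ?_⟩
    · rw [hslice, hsmul, ih2, ← ENNReal.ofReal_mul (pow_nonneg hc.le n), hfml]
    · rw [← hfml]; exact mul_nonneg (pow_nonneg hc.le n) ih1
  have hind : (fun s : ℝ => volume {y : Fin n → ℝ | Fin.snoc y s ∈ Vset (n+1) A t}) =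
      (Set.Ico (0:ℝ) 1).indicator (fun s => ENNReal.ofReal
        ((1 / n.factorial : ℝ) *
          ∑ i : Fin (n+1),
            max ((t - A i.castSucc) - (A (Fin.last (n+1)) - A i.castSucc) * s) 0 ^ n /
              ∏ j ∈ univ.erase i, (A j.castSucc - A i.castSucc))) := by
    funext s
    by_cases hs : s ∈ Set.Ico (0:ℝ) 1
    · rw [Set.indicator_of_mem hs]; exact (hpoint s hs).1
    · rw [Set.indicator_of_notMem hs]
      rcases lt_or_ge s 0 with hneg | hge
      · rw [slice_empty_neg A t hneg]; simp
      · have hone : 1 ≤ s := by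
          by_contra hlt
          push_neg at hlt
          exact hs ⟨hge, hlt⟩
        exact volume_slice_ge_one hn A t hone
  have hIco : (∫ s in Set.Ico (0:ℝ) 1, ((1 / n.factorial : ℝ) *
        ∑ i : Fin (n+1),
          max ((t - A i.castSucc) - (A (Fin.last (n+1)) - A i.castSucc) * s) 0 ^ n /
            ∏ j ∈ univ.erase i, (A j.castSucc - A i.castSucc))) =
      ∫ s in (0:ℝ)..1, ((1 / n.factorial : ℝ) *
        ∑ i : Fin (n+1),
          max ((t - A i.castSucc) - (A (Fin.last (n+1)) - A i.castSucc) * s) 0 ^ n /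
            ∏ j ∈ univ.erase i, (A j.castSucc - A i.castSucc)) := by
    rw [MeasureTheory.integral_Ico_eq_integral_Ioo,
      intervalIntegral.integral_of_le (by norm_num : (0:ℝ) ≤ 1),
      MeasureTheory.integral_Ioc_eq_integral_Ioo]
  have hval := step_formula hn A hA t
  have hnn : 0 ≤ Fml (n+1) A t := by
    rw [← hval, ← hIco]
    exact setIntegral_nonneg measurableSet_Ico fun s hs => (hpoint s hs).2
  refine ⟨hnn, ?_⟩
  rw [volume_Vset_succ A t, hind, lintegral_indicator measurableSet_Ico]
  have hintg : IntegrableOn (fun s : ℝ => (1 / n.factorial : ℝ) *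
      ∑ i : Fin (n+1),
        max ((t - A i.castSucc) - (A (Fin.last (n+1)) - A i.castSucc) * s) 0 ^ n /
          ∏ j ∈ univ.erase i, (A j.castSucc - A i.castSucc)) (Set.Ico (0:ℝ) 1) :=
    (hcont.integrableOn_Icc).mono_set Set.Ico_subset_Icc_self
  have hnonneg_ae : 0 ≤ᵐ[volume.restrict (Set.Ico (0:ℝ) 1)]
      (fun s : ℝ => (1 / n.factorial : ℝ) *
        ∑ i : Fin (n+1),
          max ((t - A i.castSucc) - (A (Fin.last (n+1)) - A i.castSucc) * s) 0 ^ n /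
            ∏ j ∈ univ.erase i, (A j.castSucc - A i.castSucc)) :=
    (ae_restrict_iff' measurableSet_Ico).mpr (ae_of_all _ fun s hs => (hpoint s hs).2)
  rw [← ofReal_integral_eq_lintegral_ofReal hintg hnonneg_ae, hIco, hval]


lemma main (n : ℕ) (hn : 1 ≤ n) : ∀ (A : Fin (n+1) → ℝ), Function.Injective A → ∀ t : ℝ,
    0 ≤ Fml n A t ∧ volume (Vset n A t) = ENNReal.ofReal (Fml n A t) := by
  induction n, hn using Nat.le_induction with
  | base => exact fun A hA t => base_case A hA t
  | succ n hn IH => exact fun A hA t => step hn IH A hA t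

end SimplexSection

/-- Volume of the section `Θ(a,t) = Δ ∩ {x : ⟨a,x⟩ ≤ t}` of the canonical simplex,
for a unit vector `a` such that `a₀ := 0, a₁, …, aₙ` are pairwise distinct. -/
theorem volume_simplex_section (n : ℕ) (a : Fin n → ℝ)
    (ha : ∑ i, a i ^ 2 = 1)
    (A : Fin (n + 1) → ℝ) (hA : A = Fin.cons 0 a)
    (hdist : ∀ i j : Fin (n + 1), i ≠ j → A i ≠ A j) (t : ℝ) :
    (volume {x : Fin n → ℝ |
        ((∀ i, 0 ≤ x i) ∧ ∑ i, x i ≤ 1) ∧ ∑ i, a i * x i ≤ t}).toReal =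
      (1 / n.factorial) *
        ∑ i : Fin (n + 1),
          max (t - A i) 0 ^ n / ∏ j ∈ univ.erase i, (A j - A i) := by
  have hn : 1 ≤ n := by
    rcases Nat.eq_zero_or_pos n with rfl | h
    · simp at ha
    · exact h
  have hAinj : Function.Injective A := fun i j hij => by
    by_contra hne
    exact hdist i j hne hij
  have hset : {x : Fin n → ℝ | ((∀ i, 0 ≤ x i) ∧ ∑ i, x i ≤ 1) ∧ ∑ i, a i * x i ≤ t}
      = SimplexSection.Vset n A t := by
    ext x
    simp only [SimplexSection.Vset, Set.mem_setOf_eq, hA, Fin.cons_zero, Fin.cons_succ,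
      zero_mul, zero_add, and_assoc]
  obtain ⟨h1, h2⟩ := SimplexSection.main n hn A hAinj t
  rw [hset, h2, ENNReal.toReal_ofReal h1, SimplexSection.Fml]
end

section
/- Let a = (a_1, ..., a_n) ∈ ℝ^n with a_i > 0 for all i, and let f(t) denote the n-dimensional Lebesgue volume of B_a(t) := {x ∈ [0,1]^n : ⟨a, x⟩ ≤ t} for t ≥ 0. Then for every real λ > 0, ∫_0^∞ exp(-λ t) f(t) dt = ∏_{i=1}^n (1 - exp(-λ a_i)) / (λ^{n+1} ∏_{i=1}^n a_i). -/
open MeasureTheory Finset Set Real Filter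

lemma my_exp_integral_Ioi {l : ℝ} (hl : 0 < l) (c : ℝ) :
    ∫ t in Ioi c, Real.exp (-(l * t)) = Real.exp (-(l * c)) / l := by
  have hderiv : ∀ x ∈ Ici c, HasDerivAt (fun t => -Real.exp (-(l * t)) / l)
      (Real.exp (-(l * x))) x := by
    intro x _
    have h1 : HasDerivAt (fun t : ℝ => -(l * t)) (-l) x := by
      have h := ((hasDerivAt_id x).const_mul l).neg
      rw [mul_one] at h
      exact h
    have h2 := (h1.exp).neg.div_const l
    exact h2.congr_deriv (by rw [mul_neg, neg_neg, mul_div_assoc, div_self hl.ne', mul_one])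
  have hint : IntegrableOn (fun t => Real.exp (-(l * t))) (Ioi c) := by
    simpa [neg_mul] using exp_neg_integrableOn_Ioi c hl
  have htend : Tendsto (fun t => -Real.exp (-(l * t)) / l) atTop (nhds 0) := by
    have h0 : Tendsto (fun t : ℝ => -(l * t)) atTop atBot := by
      simpa [neg_mul] using tendsto_id.const_mul_atTop_of_neg (neg_neg_iff_pos.2 hl)
    have := ((Real.tendsto_exp_atBot.comp h0).neg).div_const l
    simpa using this
  have := integral_Ioi_of_hasDerivAt_of_tendsto' hderiv hint htend
  rw [this]; ring

lemma my_exp_integral_Icc {k : ℝ} (hk : 0 < k) :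
    ∫ y in Icc (0:ℝ) 1, Real.exp (-(k * y)) = (1 - Real.exp (-k)) / k := by
  rw [MeasureTheory.integral_Icc_eq_integral_Ioc,
    ← intervalIntegral.integral_of_le (zero_le_one)]
  have hderiv : ∀ x ∈ Set.uIcc (0:ℝ) 1, HasDerivAt (fun t => -Real.exp (-(k * t)) / k)
      (Real.exp (-(k * x))) x := by
    intro x _
    have h1 : HasDerivAt (fun t : ℝ => -(k * t)) (-k) x := by
      have h := ((hasDerivAt_id x).const_mul k).neg
      rw [mul_one] at h
      exact h
    have h2 := (h1.exp).neg.div_const k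
    exact h2.congr_deriv (by rw [mul_neg, neg_neg, mul_div_assoc, div_self hk.ne', mul_one])
  have hint : IntervalIntegrable (fun t => Real.exp (-(k * t))) volume 0 1 :=
    (Real.continuous_exp.comp (continuous_const.mul continuous_id).neg).intervalIntegrable 0 1
  rw [intervalIntegral.integral_eq_sub_of_hasDerivAt hderiv hint]
  field_simp
  rw [mul_zero, neg_zero, Real.exp_zero]
  ring

/-- Laplace transform of `t ↦ vol({x ∈ [0,1]ⁿ : ⟨a,x⟩ ≤ t})` for `a > 0`. -/
theorem laplace_transform_cube_section_volume (n : ℕ) (a : Fin n → ℝ)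
    (ha : ∀ i, 0 < a i)
    (f : ℝ → ℝ)
    (hf : ∀ t, f t = (volume {x : Fin n → ℝ |
        (∀ i, 0 ≤ x i ∧ x i ≤ 1) ∧ ∑ i, a i * x i ≤ t}).toReal)
    (l : ℝ) (hl : 0 < l) :
    ∫ t in Set.Ioi (0 : ℝ), Real.exp (-(l * t)) * f t =
      (∏ i, (1 - Real.exp (-(l * a i)))) / (l ^ (n + 1) * ∏ i, a i) := by
  classical
  set c : (Fin n → ℝ) → ℝ := fun x => ∑ i, a i * x i with hc
  set cube : Set (Fin n → ℝ) := Set.univ.pi fun _ => Set.Icc (0:ℝ) 1 with hcube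
  have hcube_meas : MeasurableSet cube := MeasurableSet.univ_pi fun _ => measurableSet_Icc
  have hc_cont : Continuous c := by
    apply continuous_finset_sum
    intro i _
    exact continuous_const.mul (continuous_apply i)
  have hset : ∀ t : ℝ, {x : Fin n → ℝ | (∀ i, 0 ≤ x i ∧ x i ≤ 1) ∧ ∑ i, a i * x i ≤ t}
      = {x | x ∈ cube ∧ c x ≤ t} := by
    intro t; ext x
    simp only [hcube, Set.mem_setOf_eq, Set.mem_pi, Set.mem_univ, Set.mem_Icc, hc, forall_const]
  have hSmeas : ∀ t : ℝ, MeasurableSet {x : Fin n → ℝ | x ∈ cube ∧ c x ≤ t} := by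
    intro t
    exact hcube_meas.inter (measurableSet_le hc_cont.measurable measurable_const)
  have hcubevol : volume cube = 1 := by
    rw [hcube, volume_pi_pi]
    simp [Real.volume_Icc]
  have hfin : ∀ t : ℝ, volume {x : Fin n → ℝ | x ∈ cube ∧ c x ≤ t} ≠ ⊤ := by
    intro t
    have h1 : volume {x : Fin n → ℝ | x ∈ cube ∧ c x ≤ t} ≤ volume cube :=
      measure_mono fun x hx => hx.1
    rw [hcubevol] at h1
    exact ne_top_of_le_ne_top (by simp) h1
  have hf' : ∀ t, f t = (volume {x : Fin n → ℝ | x ∈ cube ∧ c x ≤ t}).toReal := by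
    intro t; rw [hf, hset]
  have hf_mono : Monotone f := by
    intro s t hst
    rw [hf' s, hf' t]
    exact ENNReal.toReal_mono (hfin t)
      (measure_mono fun x hx => ⟨hx.1, hx.2.trans hst⟩)
  -- nonnegativity of RHS pieces
  have hnum : ∀ i : Fin n, 0 < 1 - Real.exp (-(l * a i)) := by
    intro i
    have : Real.exp (-(l * a i)) < 1 :=
      Real.exp_lt_one_iff.2 (by simp [mul_pos hl (ha i)])
    linarith
  have hRHS_nonneg : 0 ≤ (∏ i, (1 - Real.exp (-(l * a i)))) / (l ^ (n + 1) * ∏ i, a i) := by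
    apply div_nonneg
    · exact Finset.prod_nonneg fun i _ => (hnum i).le
    · exact le_of_lt (mul_pos (pow_pos hl _) (Finset.prod_pos fun i _ => ha i))
  -- step 1 : convert to lintegral
  have hmeasint : Measurable fun t => Real.exp (-(l * t)) * f t :=
    ((Real.continuous_exp.comp (continuous_const.mul continuous_id).neg).measurable).mul
      hf_mono.measurable
  rw [MeasureTheory.integral_eq_lintegral_of_nonneg_ae
    (ae_of_all _ fun t => mul_nonneg (Real.exp_pos _).le (by rw [hf]; exact ENNReal.toReal_nonneg))
    hmeasint.aestronglyMeasurable]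
  -- the key lintegral computation
  have key : (∫⁻ t in Set.Ioi (0:ℝ), ENNReal.ofReal (Real.exp (-(l * t)) * f t))
      = ENNReal.ofReal ((∏ i, (1 - Real.exp (-(l * a i)))) / (l ^ (n + 1) * ∏ i, a i)) := by
    set E : Set (ℝ × (Fin n → ℝ)) := {p | p.2 ∈ cube ∧ c p.2 ≤ p.1} with hEdef
    have hE : MeasurableSet E :=
      (hcube_meas.preimage measurable_snd).inter
        (measurableSet_le (hc_cont.measurable.comp measurable_snd) measurable_fst)
    have step1 : ∀ t : ℝ, ENNReal.ofReal (Real.exp (-(l * t)) * f t)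
        = ∫⁻ x, ENNReal.ofReal (Real.exp (-(l * t))) * E.indicator 1 (t, x) := by
      intro t
      have h1 : ∀ x, ENNReal.ofReal (Real.exp (-(l * t))) * E.indicator 1 (t, x)
          = ({x : Fin n → ℝ | x ∈ cube ∧ c x ≤ t}).indicator
              (fun _ => ENNReal.ofReal (Real.exp (-(l * t)))) x := by
        intro x
        by_cases hx : x ∈ cube ∧ c x ≤ t
        · simp [hEdef, Set.indicator_of_mem, hx, Set.mem_setOf_eq]
        · simp [hEdef, Set.indicator_of_notMem, hx, Set.mem_setOf_eq]
      rw [lintegral_congr h1, lintegral_indicator (hSmeas t), setLIntegral_const,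
        hf' t, ENNReal.ofReal_mul (Real.exp_pos _).le, ENNReal.ofReal_toReal (hfin t)]
    simp_rw [step1]
    have hswapmeas : AEMeasurable
        (Function.uncurry fun t x => ENNReal.ofReal (Real.exp (-(l * t))) * E.indicator 1 (t, x))
        ((volume.restrict (Set.Ioi (0:ℝ))).prod volume) := by
      apply Measurable.aemeasurable
      apply Measurable.mul
      · exact ((Real.continuous_exp.comp
          (continuous_const.mul continuous_fst).neg).measurable).ennreal_ofReal
      · exact (measurable_one.indicator hE)
    rw [lintegral_lintegral_swap hswapmeas]
    have inner : ∀ x : Fin n → ℝ,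
        (∫⁻ t in Set.Ioi (0:ℝ), ENNReal.ofReal (Real.exp (-(l * t))) * E.indicator 1 (t, x))
        = cube.indicator (fun x => ENNReal.ofReal (Real.exp (-(l * c x)) / l)) x := by
      intro x
      by_cases hx : x ∈ cube
      · have hcnn : 0 ≤ c x :=
          Finset.sum_nonneg fun i _ => mul_nonneg (ha i).le (hx i (Set.mem_univ i)).1
        have heq : ∀ t, ENNReal.ofReal (Real.exp (-(l * t))) * E.indicator 1 (t, x)
            = (Set.Ici (c x)).indicator (fun t => ENNReal.ofReal (Real.exp (-(l * t)))) t := by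
          intro t
          by_cases ht : c x ≤ t
          · simp [hEdef, Set.indicator_of_mem, hx, ht, Set.mem_Ici, Set.mem_setOf_eq]
          · simp [hEdef, Set.indicator_of_notMem, hx, ht, Set.mem_Ici, Set.mem_setOf_eq]
        simp_rw [heq]
        rw [lintegral_indicator measurableSet_Ici,
          Measure.restrict_restrict measurableSet_Ici]
        have hae : (Set.Ici (c x) ∩ Set.Ioi (0:ℝ) : Set ℝ) =ᵐ[volume] Set.Ioi (c x) := by
          rw [MeasureTheory.ae_eq_set]
          constructor
          · refine measure_mono_null (fun y hy => ?_) (measure_singleton (c x))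
            have h1 : c x ≤ y := hy.1.1
            have h2 : ¬ c x < y := fun h => hy.2 h
            simp [le_antisymm (not_lt.1 h2) h1]
          · refine measure_mono_null (t := (∅ : Set ℝ)) (fun y hy => ?_) (by simp)
            exact absurd ⟨Set.mem_Ici.2 (Set.mem_Ioi.1 hy.1).le, Set.mem_Ioi.2 (lt_of_le_of_lt hcnn hy.1)⟩ hy.2
        rw [Measure.restrict_congr_set hae]
        have hint' : IntegrableOn (fun t => Real.exp (-(l * t))) (Set.Ioi (c x)) := by
          simpa [neg_mul] using exp_neg_integrableOn_Ioi (c x) hl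
        rw [← ofReal_integral_eq_lintegral_ofReal hint'
          (ae_of_all _ fun t => (Real.exp_pos _).le),
          my_exp_integral_Ioi hl (c x), Set.indicator_of_mem hx]
      · have heq0 : ∀ t, ENNReal.ofReal (Real.exp (-(l * t))) * E.indicator 1 (t, x) = 0 := by
          intro t
          have : (t, x) ∉ E := fun h => hx h.1
          simp [Set.indicator_of_notMem this]
        simp_rw [heq0]
        simp [Set.indicator_of_notMem hx]
    simp_rw [inner]
    have houter : ∀ x, cube.indicator (fun x => ENNReal.ofReal (Real.exp (-(l * c x)) / l)) x
        = ENNReal.ofReal (cube.indicator (fun x => Real.exp (-(l * c x)) / l) x) := by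
      intro x; by_cases hx : x ∈ cube <;> simp [hx]
    simp_rw [houter]
    have hgint : Integrable (cube.indicator (fun x => Real.exp (-(l * c x)) / l)) volume := by
      apply MeasureTheory.IntegrableOn.integrable_indicator _ hcube_meas
      apply ContinuousOn.integrableOn_compact (isCompact_univ_pi fun _ => isCompact_Icc)
      exact ((Real.continuous_exp.comp ((continuous_const.mul hc_cont).neg)).div_const l).continuousOn
    rw [← ofReal_integral_eq_lintegral_ofReal hgint
      (ae_of_all _ (Set.indicator_nonneg fun x _ => by positivity))]
    have hval : (∫ x, cube.indicator (fun x => Real.exp (-(l * c x)) / l) x)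
        = (∏ i, (1 - Real.exp (-(l * a i))) / (l * a i)) / l := by
      have hprod : ∀ x : Fin n → ℝ, cube.indicator (fun x => Real.exp (-(l * c x)) / l) x
          = (∏ i, (Set.Icc (0:ℝ) 1).indicator (fun y => Real.exp (-(l * a i * y))) (x i)) / l := by
        intro x
        by_cases hx : x ∈ cube
        · rw [Set.indicator_of_mem hx]
          congr 1
          rw [Finset.prod_congr rfl (fun i _ =>
            Set.indicator_of_mem (hx i (Set.mem_univ i)) _), ← Real.exp_sum]
          congr 1
          rw [hc]
          simp only [Finset.mul_sum, neg_mul, Finset.sum_neg_distrib]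
          congr 1
          exact Finset.sum_congr rfl fun i _ => (mul_assoc _ _ _).symm
        · rw [Set.indicator_of_notMem hx]
          rw [hcube] at hx
          simp only [Set.mem_pi, Set.mem_univ, forall_true_left, not_forall] at hx
          obtain ⟨i, hi⟩ := hx
          rw [Finset.prod_eq_zero (Finset.mem_univ i)
            (Set.indicator_of_notMem hi _), zero_div]
      simp_rw [hprod]
      rw [integral_div, MeasureTheory.volume_pi, MeasureTheory.integral_fin_nat_prod_eq_prod
        (f := fun i => (Set.Icc (0:ℝ) 1).indicator fun y => Real.exp (-(l * a i * y)))]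
      congr 1
      refine Finset.prod_congr rfl fun i _ => ?_
      rw [MeasureTheory.integral_indicator measurableSet_Icc]
      exact my_exp_integral_Icc (mul_pos hl (ha i))
    rw [hval]
    congr 1
    rw [Finset.prod_div_distrib, Finset.prod_mul_distrib, Finset.prod_const, div_div]
    congr 1
    rw [Finset.card_fin]
    ring
  rw [key, ENNReal.toReal_ofReal hRHS_nonneg]
end

section
/- Let a = (a_1, ..., a_n) ∈ ℝ^n with a_i > 0 for all i. Then for every t ≥ 0, the n-dimensional Lebesgue volume of B_a(t) := {x ∈ [0,1]^n : ⟨a, x⟩ ≤ t} equals (1 / (n! · ∏_{i=1}^n a_i)) · Σ_{U ⊆ {1,...,n}} (-1)^{#U} · (t - Σ_{i ∈ U} a_i)_+^n, where the sum runs over all subsets U of {1, ..., n} and #U denotes the cardinality of U. -/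
open MeasureTheory Finset

def simplexSet (n : ℕ) (c : ℝ) : Set (Fin n → ℝ) :=
  {y | (∀ i, 0 ≤ y i) ∧ ∑ i, y i ≤ c}

lemma measurableSet_simplexSet (n : ℕ) (c : ℝ) : MeasurableSet (simplexSet n c) := by
  have : simplexSet n c = {y : Fin n → ℝ | ∀ i, 0 ≤ y i} ∩ {y | ∑ i, y i ≤ c} := rfl
  rw [this]
  apply MeasurableSet.inter
  · have : {y : Fin n → ℝ | ∀ i, 0 ≤ y i} = Set.pi Set.univ (fun _ => Set.Ici 0) := by
      ext y; simp [Set.mem_pi, Pi.le_def]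
    rw [this]
    exact MeasurableSet.univ_pi fun _ => measurableSet_Ici
  · exact measurableSet_le (by measurability) measurable_const

lemma simplexSet_empty {n : ℕ} {c : ℝ} (hc : c < 0) : simplexSet n c = ∅ := by
  ext y
  simp only [simplexSet, Set.mem_setOf_eq, Set.mem_empty_iff_false, iff_false, not_and]
  intro h hs
  exact absurd (le_trans (Finset.sum_nonneg fun i _ => h i) hs) (not_le.2 hc)

lemma volume_simplexSet (n : ℕ) (c : ℝ) (hc : 0 ≤ c) :
    volume (simplexSet n c) = ENNReal.ofReal (c ^ n / n.factorial) := by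
  induction n generalizing c with
  | zero =>
    have : simplexSet 0 c = Set.univ := by
      ext y; simp [simplexSet, hc]
    rw [this]
    have h1 : (Set.univ : Set (Fin 0 → ℝ)) = Set.pi Set.univ (fun _ => Set.univ) := by
      simp
    rw [h1, volume_pi_pi]
    simp
  | succ n ih =>
    set e := MeasurableEquiv.piFinSuccAbove (fun _ : Fin (n+1) => ℝ) 0 with he
    have hmp : MeasurePreserving e.symm volume volume :=
      (volume_preserving_piFinSuccAbove (fun _ : Fin (n+1) => ℝ) 0).symm e
    set T : Set (ℝ × (Fin n → ℝ)) :=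
      {p | 0 ≤ p.1 ∧ (∀ i, 0 ≤ p.2 i) ∧ p.1 + ∑ i, p.2 i ≤ c} with hT
    have hTmeas : MeasurableSet T := by
      have hTeq : T = {p : ℝ × (Fin n → ℝ) | 0 ≤ p.1} ∩
          ((⋂ i, {p : ℝ × (Fin n → ℝ) | 0 ≤ p.2 i}) ∩
            {p : ℝ × (Fin n → ℝ) | p.1 + ∑ i, p.2 i ≤ c}) := by
        ext p; simp only [hT, Set.mem_setOf_eq, Set.mem_inter_iff, Set.mem_iInter]
      rw [hTeq]
      refine (measurableSet_le measurable_const measurable_fst).inter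
        ((MeasurableSet.iInter fun i => measurableSet_le measurable_const
          ((measurable_pi_apply i).comp measurable_snd)).inter
          (measurableSet_le (f := fun p : ℝ × (Fin n → ℝ) => p.1 + ∑ i, p.2 i) (by measurability) measurable_const))
    have hpre : e.symm ⁻¹' (simplexSet (n+1) c) = T := by
      ext p
      have hes : e.symm p = Fin.cons p.1 p.2 := by
        show Fin.insertNth (α := fun _ : Fin (n+1) => ℝ) 0 p.1 p.2 = _
        exact Fin.insertNth_zero' p.1 p.2
      rw [Set.mem_preimage, hes]
      simp only [simplexSet, Set.mem_setOf_eq, hT, Fin.forall_fin_succ, Fin.cons_zero,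
        Fin.cons_succ, Fin.sum_cons]
      tauto
    have hvol : volume (simplexSet (n+1) c) = volume T := by
      rw [← hpre]
      exact (hmp.measure_preimage (measurableSet_simplexSet (n+1) c).nullMeasurableSet).symm
    rw [hvol]
    have hprod : (volume : Measure (ℝ × (Fin n → ℝ))) = (volume : Measure ℝ).prod volume :=
      Measure.volume_eq_prod _ _
    rw [hprod, Measure.prod_apply hTmeas]
    have hslice : (fun x => volume (Prod.mk x ⁻¹' T)) =
        (Set.Icc 0 c).indicator (fun x => ENNReal.ofReal ((c - x) ^ n / n.factorial)) := by
      funext x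
      have hsl : Prod.mk x ⁻¹' T = if 0 ≤ x then simplexSet n (c - x) else ∅ := by
        split_ifs with hx
        · ext y
          simp only [Set.mem_preimage, hT, Set.mem_setOf_eq, simplexSet]
          constructor
          · rintro ⟨_, h1, h2⟩; exact ⟨h1, by linarith⟩
          · rintro ⟨h1, h2⟩; exact ⟨hx, h1, by linarith⟩
        · ext y; simp only [Set.mem_preimage, hT, Set.mem_setOf_eq, Set.mem_empty_iff_false,
            iff_false]
          rintro ⟨h0, -⟩; exact hx h0
      rw [hsl]
      rcases le_or_gt 0 x with hx | hx
      · rw [if_pos hx]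
        rcases le_or_gt x c with hxc | hxc
        · rw [ih (c - x) (by linarith), Set.indicator_of_mem (Set.mem_Icc.2 ⟨hx, hxc⟩)]
        · rw [simplexSet_empty (by linarith), Set.indicator_of_notMem (by simp [hxc.not_ge])]
          simp
      · rw [if_neg hx.not_ge, Set.indicator_of_notMem (by simp [hx.not_ge])]
        simp
    rw [hslice, lintegral_indicator measurableSet_Icc _]
    have hint : IntegrableOn (fun x => (c - x) ^ n / n.factorial) (Set.Icc 0 c) volume :=
      (Continuous.integrableOn_Icc (by fun_prop))
    have hae : 0 ≤ᵐ[volume.restrict (Set.Icc 0 c)] fun x => (c - x) ^ n / n.factorial := by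
      refine ae_restrict_of_forall_mem measurableSet_Icc fun x hx => ?_
      exact div_nonneg (pow_nonneg (by linarith [hx.2]) n) (by positivity)
    rw [← ofReal_integral_eq_lintegral_ofReal hint hae]
    congr 1
    rw [MeasureTheory.integral_Icc_eq_integral_Ioc, ← intervalIntegral.integral_of_le hc]
    have h1 : ∫ x in (0:ℝ)..c, (c - x) ^ n / n.factorial =
        (∫ x in (0:ℝ)..c, (c - x) ^ n) / n.factorial := intervalIntegral.integral_div _ _
    have h2 : ∫ x in (0:ℝ)..c, (c - x) ^ n = c ^ (n+1) / (n+1) := by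
      have := intervalIntegral.integral_comp_sub_left (a := (0:ℝ)) (b := c)
        (fun x => x ^ n) c
      rw [this]
      simp [integral_pow]
    rw [h1, h2, Nat.factorial_succ]
    push_cast
    field_simp

def shiftSet (n : ℕ) (a : Fin n → ℝ) (t : ℝ) (U : Finset (Fin n)) : Set (Fin n → ℝ) :=
  {y | (∀ i, 0 ≤ y i) ∧ (∀ i ∈ U, a i ≤ y i) ∧ ∑ i, y i ≤ t}

lemma measurableSet_shiftSet (n : ℕ) (a : Fin n → ℝ) (t : ℝ) (U : Finset (Fin n)) :
    MeasurableSet (shiftSet n a t U) := by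
  have : shiftSet n a t U = {y : Fin n → ℝ | ∀ i, 0 ≤ y i} ∩
      ((⋂ i ∈ U, {y : Fin n → ℝ | a i ≤ y i}) ∩ {y : Fin n → ℝ | ∑ i, y i ≤ t}) := by
    ext y; simp [shiftSet]
  rw [this]
  refine MeasurableSet.inter ?_ (MeasurableSet.inter ?_ ?_)
  · have : {y : Fin n → ℝ | ∀ i, 0 ≤ y i} = ⋂ i, {y : Fin n → ℝ | 0 ≤ y i} := by ext y; simp
    rw [this]
    exact MeasurableSet.iInter fun i => measurableSet_le measurable_const (measurable_pi_apply i)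
  · exact MeasurableSet.biInter (Set.to_countable _) fun i _ =>
      measurableSet_le measurable_const (measurable_pi_apply i)
  · exact measurableSet_le (by measurability) measurable_const

lemma volume_shiftSet (n : ℕ) (a : Fin n → ℝ) (ha : ∀ i, 0 < a i) (t : ℝ) (ht : 0 ≤ t)
    (U : Finset (Fin n)) :
    volume (shiftSet n a t U) =
      ENNReal.ofReal (max (t - ∑ i ∈ U, a i) 0 ^ n / n.factorial) := by
  set c : ℝ := t - ∑ i ∈ U, a i with hc
  set v : Fin n → ℝ := fun i => if i ∈ U then a i else 0 with hv
  have hsumv : ∑ i, v i = ∑ i ∈ U, a i := by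
    rw [hv]
    simp [Finset.sum_ite_mem]
  rcases le_or_gt 0 c with h0c | h0c
  · have hpre : (fun y => v + y) ⁻¹' (shiftSet n a t U) = simplexSet n c := by
      ext y
      simp only [Set.mem_preimage, shiftSet, Set.mem_setOf_eq, simplexSet, Pi.add_apply]
      constructor
      · rintro ⟨h1, h2, h3⟩
        constructor
        · intro i
          by_cases hi : i ∈ U
          · have := h2 i hi; simp only [hv, if_pos hi] at this; linarith
          · have := h1 i; simp only [hv, if_neg hi] at this; linarith
        · have : ∑ i, (v i + y i) = ∑ i ∈ U, a i + ∑ i, y i := by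
            rw [Finset.sum_add_distrib, hsumv]
          rw [this] at h3; linarith
      · rintro ⟨h1, h2⟩
        refine ⟨fun i => ?_, fun i hi => ?_, ?_⟩
        · by_cases hi : i ∈ U
          · simp only [hv, if_pos hi]; have := h1 i; have := (ha i).le; linarith
          · simp only [hv, if_neg hi]; have := h1 i; linarith
        · simp only [hv, if_pos hi]; have := h1 i; linarith
        · have : ∑ i, (v i + y i) = ∑ i ∈ U, a i + ∑ i, y i := by
            rw [Finset.sum_add_distrib, hsumv]
          rw [this]; linarith
    have := measure_preimage_add (volume : Measure (Fin n → ℝ)) v (shiftSet n a t U)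
    rw [← this, hpre, volume_simplexSet n c h0c, max_eq_left h0c]
  · have hU : U.Nonempty := by
      rcases U.eq_empty_or_nonempty with h | h
      · exfalso; rw [h] at hc; simp at hc; rw [hc] at h0c; linarith
      · exact h
    have hn : n ≠ 0 := by
      obtain ⟨i, -⟩ := hU
      exact Fin.pos_iff_nonempty.2 ⟨i⟩ |>.ne'
    have hempty : shiftSet n a t U = ∅ := by
      ext y
      simp only [shiftSet, Set.mem_setOf_eq, Set.mem_empty_iff_false, iff_false, not_and]
      intro h1 h2 h3
      have hle : ∑ i ∈ U, a i ≤ ∑ i ∈ U, y i := Finset.sum_le_sum h2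
      have hle2 : ∑ i ∈ U, y i ≤ ∑ i, y i :=
        Finset.sum_le_sum_of_subset_of_nonneg (Finset.subset_univ U) fun i _ _ => h1 i
      have : ∑ i ∈ U, a i ≤ t := le_trans hle (le_trans hle2 h3)
      linarith
    rw [hempty, max_eq_right h0c.le, zero_pow hn]
    simp

open scoped Classical in
lemma indicator_key (n : ℕ) (a : Fin n → ℝ) (ha : ∀ i, 0 < a i) (t : ℝ) (y : Fin n → ℝ) :
    (if (∀ i, y i ∈ Set.Ico 0 (a i)) ∧ ∑ i, y i ≤ t then (1:ℝ) else 0)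
      = ∑ U : Finset (Fin n), (-1:ℝ)^U.card * (if y ∈ shiftSet n a t U then 1 else 0) := by
  have h1 : ∀ i : Fin n, (if y i ∈ Set.Ico 0 (a i) then (1:ℝ) else 0)
      = (-(if a i ≤ y i then (1:ℝ) else 0)) + (if 0 ≤ y i then 1 else 0) := by
    intro i
    have hai := ha i
    by_cases h0 : 0 ≤ y i <;> by_cases h2 : a i ≤ y i
    · rw [if_neg (by simp [Set.mem_Ico, not_lt.2 h2]), if_pos h2, if_pos h0]; ring
    · rw [if_pos (Set.mem_Ico.2 ⟨h0, not_le.1 h2⟩), if_neg h2, if_pos h0]; ring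
    · exact absurd (le_trans hai.le h2) h0
    · rw [if_neg (by simp [Set.mem_Ico, h0]), if_neg h2, if_neg h0]; ring
  calc (if (∀ i, y i ∈ Set.Ico 0 (a i)) ∧ ∑ i, y i ≤ t then (1:ℝ) else 0)
      = (∏ i, if y i ∈ Set.Ico 0 (a i) then (1:ℝ) else 0) * (if ∑ i, y i ≤ t then 1 else 0) := by
        rw [Fintype.prod_boole]
        by_cases hA : ∀ i, y i ∈ Set.Ico 0 (a i) <;> by_cases hB : ∑ i, y i ≤ t <;>
          simp [hA, hB]
    _ = (∑ U : Finset (Fin n), (∏ i ∈ U, -(if a i ≤ y i then (1:ℝ) else 0)) *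
          ∏ i ∈ Uᶜ, (if 0 ≤ y i then (1:ℝ) else 0)) * (if ∑ i, y i ≤ t then 1 else 0) := by
        rw [← Fintype.prod_add]
        congr 1
        exact Finset.prod_congr rfl fun i _ => h1 i
    _ = ∑ U : Finset (Fin n), (-1:ℝ)^U.card * (if y ∈ shiftSet n a t U then 1 else 0) := by
        rw [Finset.sum_mul]
        refine Finset.sum_congr rfl fun U _ => ?_
        have hprodneg : (∏ i ∈ U, -(if a i ≤ y i then (1:ℝ) else 0))
            = (-1:ℝ)^U.card * ∏ i ∈ U, (if a i ≤ y i then (1:ℝ) else 0) := by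
          have hcong : ∀ i ∈ U, -(if a i ≤ y i then (1:ℝ) else 0)
              = (-1) * (if a i ≤ y i then (1:ℝ) else 0) := fun i _ => by ring
          rw [Finset.prod_congr rfl hcong, Finset.prod_mul_distrib, Finset.prod_const]
        rw [hprodneg, Finset.prod_boole, Finset.prod_boole]
        have hiff : y ∈ shiftSet n a t U ↔
            ((∀ i ∈ U, a i ≤ y i) ∧ (∀ i ∈ Uᶜ, 0 ≤ y i) ∧ ∑ i, y i ≤ t) := by
          simp only [shiftSet, Set.mem_setOf_eq, Finset.mem_compl]
          constructor
          · rintro ⟨h0, hU, hs⟩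
            exact ⟨hU, fun i _ => h0 i, hs⟩
          · rintro ⟨hU, hUc, hs⟩
            refine ⟨fun i => ?_, hU, hs⟩
            by_cases hi : i ∈ U
            · exact le_trans (ha i).le (hU i hi)
            · exact hUc i hi
        simp only [hiff]
        split_ifs with hP hQ hR hC <;> try ring
        all_goals (exfalso; tauto)

lemma volume_box_inter_toReal (n : ℕ) (a : Fin n → ℝ) (ha : ∀ i, 0 < a i) (t : ℝ)
    (ht : 0 ≤ t) :
    (volume ((Set.pi Set.univ fun i => Set.Ico 0 (a i)) ∩
        {y : Fin n → ℝ | ∑ i, y i ≤ t})).toReal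
      = ∑ U : Finset (Fin n), (-1:ℝ)^U.card * (volume (shiftSet n a t U)).toReal := by
  classical
  set S := (Set.pi Set.univ fun i => Set.Ico 0 (a i)) ∩ {y : Fin n → ℝ | ∑ i, y i ≤ t} with hS
  have hmeasS : MeasurableSet S :=
    (MeasurableSet.univ_pi fun i => measurableSet_Ico).inter
      (measurableSet_le (by measurability) measurable_const)
  have hfinU : ∀ U : Finset (Fin n), volume (shiftSet n a t U) < ⊤ := by
    intro U
    rw [volume_shiftSet n a ha t ht U]
    exact ENNReal.ofReal_lt_top
  have hintU : ∀ U : Finset (Fin n),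
      Integrable ((shiftSet n a t U).indicator (fun _ => (1:ℝ))) volume := fun U =>
    (integrable_indicator_iff (measurableSet_shiftSet n a t U)).2
      (integrableOn_const (hfinU U).ne)
  calc (volume S).toReal = ∫ y, S.indicator 1 y := (integral_indicator_one hmeasS).symm
    _ = ∫ y, ∑ U : Finset (Fin n),
          (-1:ℝ)^U.card * (shiftSet n a t U).indicator (fun _ => (1:ℝ)) y := by
        congr 1
        funext y
        have hkey := indicator_key n a ha t y
        have hmem : (y ∈ S) = ((∀ i, y i ∈ Set.Ico 0 (a i)) ∧ ∑ i, y i ≤ t) := by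
          simp [hS, Set.mem_pi]
        simp only [Set.indicator_apply, Pi.one_apply, hmem]
        convert hkey using 2
    _ = ∑ U : Finset (Fin n),
          ∫ y, (-1:ℝ)^U.card * (shiftSet n a t U).indicator (fun _ => (1:ℝ)) y :=
        integral_finset_sum _ (fun U _ => (hintU U).const_mul _)
    _ = ∑ U : Finset (Fin n), (-1:ℝ)^U.card * (volume (shiftSet n a t U)).toReal := by
        refine Finset.sum_congr rfl fun U _ => ?_
        rw [integral_const_mul]
        congr 1
        exact integral_indicator_one (measurableSet_shiftSet n a t U)

lemma volume_hyperplane (n : ℕ) (i : Fin n) (c : ℝ) :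
    volume {y : Fin n → ℝ | y i = c} = 0 := by
  classical
  have h : {y : Fin n → ℝ | y i = c} =
      Set.pi Set.univ (fun j => if j = i then {c} else Set.univ) := by
    ext y
    simp only [Set.mem_setOf_eq, Set.mem_pi, Set.mem_univ, true_implies]
    constructor
    · intro h j
      by_cases hj : j = i
      · subst hj; simp [h]
      · simp [hj]
    · intro h
      have := h i
      simpa using this
  rw [h, volume_pi_pi]
  exact Finset.prod_eq_zero (Finset.mem_univ i) (by simp)

lemma volume_closedBox_section (n : ℕ) (a : Fin n → ℝ) (ha : ∀ i, 0 < a i) (t : ℝ) :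
    volume {y : Fin n → ℝ | (∀ i, 0 ≤ y i ∧ y i ≤ a i) ∧ ∑ i, y i ≤ t} =
      volume ((Set.pi Set.univ fun i => Set.Ico 0 (a i)) ∩
        {y : Fin n → ℝ | ∑ i, y i ≤ t}) := by
  set C := {y : Fin n → ℝ | (∀ i, 0 ≤ y i ∧ y i ≤ a i) ∧ ∑ i, y i ≤ t} with hCdef
  set S := (Set.pi Set.univ fun i => Set.Ico 0 (a i)) ∩ {y : Fin n → ℝ | ∑ i, y i ≤ t}
    with hSdef
  have hsub1 : S ⊆ C := by
    rintro y ⟨h1, h2⟩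
    exact ⟨fun i => ⟨(h1 i (Set.mem_univ i)).1, (h1 i (Set.mem_univ i)).2.le⟩, h2⟩
  have hsub2 : C ⊆ S ∪ ⋃ i, {y : Fin n → ℝ | y i = a i} := by
    rintro y ⟨h1, h2⟩
    by_cases hy : ∀ i, y i < a i
    · exact Or.inl ⟨fun i _ => ⟨(h1 i).1, hy i⟩, h2⟩
    · push_neg at hy
      obtain ⟨i, hi⟩ := hy
      exact Or.inr (Set.mem_iUnion.2 ⟨i, le_antisymm (h1 i).2 hi⟩)
  have hnull : volume (⋃ i, {y : Fin n → ℝ | y i = a i}) = 0 :=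
    measure_iUnion_null fun i => volume_hyperplane n i (a i)
  refine le_antisymm ?_ (measure_mono hsub1)
  calc volume C ≤ volume (S ∪ ⋃ i, {y : Fin n → ℝ | y i = a i}) := measure_mono hsub2
    _ ≤ volume S + volume (⋃ i, {y : Fin n → ℝ | y i = a i}) := measure_union_le _ _
    _ = volume S := by rw [hnull, add_zero]


/-- Marichal–Mossinghof formula: the volume of the section
`{x ∈ [0,1]ⁿ : ⟨a,x⟩ ≤ t}` of the unit hypercube, for `a > 0`, equals
`(1/(n! ∏ᵢ aᵢ)) ∑_{U ⊆ {1,…,n}} (-1)^{#U} (t - ∑_{i ∈ U} aᵢ)₊ⁿ`. -/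
theorem volume_cube_section (n : ℕ) (a : Fin n → ℝ) (ha : ∀ i, 0 < a i)
    (t : ℝ) (ht : 0 ≤ t) :
    (volume {x : Fin n → ℝ |
        (∀ i, 0 ≤ x i ∧ x i ≤ 1) ∧ ∑ i, a i * x i ≤ t}).toReal =
      (1 / (n.factorial * ∏ i, a i)) *
        ∑ U : Finset (Fin n), (-1 : ℝ) ^ U.card * max (t - ∑ i ∈ U, a i) 0 ^ n := by
  classical
  set L : (Fin n → ℝ) →ₗ[ℝ] (Fin n → ℝ) := Matrix.toLin' (Matrix.diagonal a) with hL
  have hdet : LinearMap.det L = ∏ i, a i := by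
    rw [hL, LinearMap.det_toLin', Matrix.det_diagonal]
  have hprod_pos : 0 < ∏ i, a i := Finset.prod_pos fun i _ => ha i
  have hdet_ne : LinearMap.det L ≠ 0 := by rw [hdet]; exact hprod_pos.ne'
  set C := {y : Fin n → ℝ | (∀ i, 0 ≤ y i ∧ y i ≤ a i) ∧ ∑ i, y i ≤ t} with hCdef
  have hLy : ∀ (x : Fin n → ℝ) (i : Fin n), L x i = a i * x i := by
    intro x i
    rw [hL]
    simp [Matrix.toLin'_apply, Matrix.mulVec_diagonal]
  have hsumL : ∀ x : Fin n → ℝ, ∑ i, L x i = ∑ i, a i * x i := fun x =>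
    Finset.sum_congr rfl fun i _ => hLy x i
  have hpre : {x : Fin n → ℝ | (∀ i, 0 ≤ x i ∧ x i ≤ 1) ∧ ∑ i, a i * x i ≤ t}
      = L ⁻¹' C := by
    ext x
    simp only [Set.mem_setOf_eq, Set.mem_preimage, hCdef]
    constructor
    · rintro ⟨h1, h2⟩
      refine ⟨fun i => ?_, ?_⟩
      · rw [hLy x i]
        exact ⟨mul_nonneg (ha i).le (h1 i).1,
          (mul_le_iff_le_one_right (ha i)).2 (h1 i).2⟩
      · rw [hsumL x]; exact h2
    · rintro ⟨h1, h2⟩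
      refine ⟨fun i => ?_, ?_⟩
      · have h0 := (h1 i).1
        have h1' := (h1 i).2
        rw [hLy x i] at h0 h1'
        exact ⟨(mul_nonneg_iff_of_pos_left (ha i)).1 h0,
          (mul_le_iff_le_one_right (ha i)).1 h1'⟩
      · rw [hsumL x] at h2; exact h2
  rw [hpre]
  have hvol : volume (L ⁻¹' C) = ENNReal.ofReal |(∏ i, a i)⁻¹| *
      volume ((Set.pi Set.univ fun i => Set.Ico 0 (a i)) ∩
        {y : Fin n → ℝ | ∑ i, y i ≤ t}) := by
    rw [Measure.addHaar_preimage_linearMap volume hdet_ne, hdet,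
      hCdef, volume_closedBox_section n a ha t]
  rw [hvol, ENNReal.toReal_mul, ENNReal.toReal_ofReal (abs_nonneg _),
    volume_box_inter_toReal n a ha t ht]
  have habs : |(∏ i, a i)⁻¹| = (∏ i, a i)⁻¹ := abs_of_pos (inv_pos.2 hprod_pos)
  rw [habs, Finset.mul_sum, Finset.mul_sum]
  refine Finset.sum_congr rfl fun U _ => ?_
  rw [volume_shiftSet n a ha t ht U, ENNReal.toReal_ofReal (by positivity)]
  have hfac : (n.factorial : ℝ) ≠ 0 := Nat.cast_ne_zero.2 n.factorial_ne_zero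
  field_simp
  try ring
  try exact Or.inl trivial
end

section
/- Let a = (a_1, ..., a_n) ∈ ℝ^n, set a_0 := 0, assume a_i ≠ a_j for every pair of distinct indices i, j ∈ {0, 1, ..., n}, and assume a_i < 0 for at least one i. Let t* := min_{0 ≤ i ≤ n} a_i (so t* < 0), and let f(t) denote the n-dimensional Lebesgue volume of Θ(a,t) := Δ ∩ {x : ⟨a, x⟩ ≤ t}, and g(t) := f(t + t*). Then for every real λ > 0, ∫_0^∞ exp(-λ t) g(t) dt = Σ_{i=0}^{n} exp(-λ (a_i - t*)) / (λ^{n+1} · ∏_{j ≠ i, 0 ≤ j ≤ n} (a_j - a_i)). -/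
open MeasureTheory Finset


lemma prod_erase_zero {M : Type*} [CommMonoid M] {n : ℕ} (g : Fin (n+1) → M) :
    ∏ j ∈ univ.erase 0, g j = ∏ j : Fin n, g j.succ := by
  rw [Fin.univ_succ, Finset.erase_cons, Finset.prod_map]
  rfl

lemma prod_erase_succ {M : Type*} [CommMonoid M] {n : ℕ} (g : Fin (n+1) → M) (k : Fin n) :
    ∏ j ∈ univ.erase k.succ, g j = g 0 * ∏ j ∈ univ.erase k, g j.succ := by
  rw [Fin.univ_succ, Finset.erase_cons_of_ne _ (Fin.succ_ne_zero k).symm,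
    Finset.prod_cons]
  congr 1
  rw [show (k.succ : Fin (n+1)) = (⟨Fin.succ, Fin.succ_injective n⟩ : Fin n ↪ Fin (n+1)) k from rfl,
    ← Finset.map_erase, Finset.prod_map]
  rfl



lemma Drec {n : ℕ} (b : Fin (n+2) → ℝ) (hb : Function.Injective b) :
    ∑ i : Fin (n+2), Real.exp (b i) / ∏ j ∈ univ.erase i, (b i - b j)
    = ((∑ i : Fin (n+1), Real.exp (Fin.tail b i) /
          ∏ j ∈ univ.erase i, (Fin.tail b i - Fin.tail b j))
      - (∑ i : Fin (n+1), Real.exp (Fin.cons (b 0) (Fin.tail (Fin.tail b)) i) /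
          ∏ j ∈ univ.erase i, (Fin.cons (b 0) (Fin.tail (Fin.tail b)) i
            - Fin.cons (b 0) (Fin.tail (Fin.tail b)) j))) / (b 1 - b 0) := by
  have hne : ∀ i j : Fin (n+2), i ≠ j → b i - b j ≠ 0 := fun i j h => by
    exact sub_ne_zero.mpr (fun hh => h (hb hh))
  have h10 : b 1 - b 0 ≠ 0 := hne 1 0 (by simp [Fin.ext_iff])
  simp only [Fin.sum_univ_succ, Fin.tail, Fin.cons_zero, Fin.cons_succ,
    prod_erase_zero, prod_erase_succ, Fin.prod_univ_succ, Fin.succ_zero_eq_one]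
  have hQ : ∀ i : Fin n, (∏ j ∈ univ.erase i, (b i.succ.succ - b j.succ.succ)) ≠ 0 := by
    intro i
    refine Finset.prod_ne_zero_iff.mpr fun j hj => hne _ _ ?_
    have := Finset.ne_of_mem_erase hj
    simpa [Fin.succ_inj] using fun h => this (Fin.succ_injective _ (Fin.succ_injective _ h)).symm
  have hsum : ∀ i ∈ (univ : Finset (Fin n)),
      Real.exp (b i.succ.succ) / ((b i.succ.succ - b 0) * ((b i.succ.succ - b 1) *
          ∏ j ∈ univ.erase i, (b i.succ.succ - b j.succ.succ)))
      = (Real.exp (b i.succ.succ) / ((b i.succ.succ - b 1) *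
            ∏ j ∈ univ.erase i, (b i.succ.succ - b j.succ.succ))
        - Real.exp (b i.succ.succ) / ((b i.succ.succ - b 0) *
            ∏ j ∈ univ.erase i, (b i.succ.succ - b j.succ.succ))) / (b 1 - b 0) := by
    intro i _
    have h0 : b i.succ.succ - b 0 ≠ 0 := hne _ _ (by simp [Fin.ext_iff])
    have h1 : b i.succ.succ - b 1 ≠ 0 := hne _ _ (by simp [Fin.ext_iff])
    have hq := hQ i
    have hX : (b i.succ.succ - b 0) - (b i.succ.succ - b 1) ≠ 0 := by
      rw [show (b i.succ.succ - b 0) - (b i.succ.succ - b 1) = b 1 - b 0 by ring]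
      exact h10
    rw [show b 1 - b 0 = (b i.succ.succ - b 0) - (b i.succ.succ - b 1) by ring]
    generalize b i.succ.succ - b 0 = X0 at hX h0 ⊢
    generalize b i.succ.succ - b 1 = X1 at hX h1 ⊢
    generalize (∏ j ∈ univ.erase i, (b i.succ.succ - b j.succ.succ)) = Q at hq ⊢
    generalize Real.exp (b i.succ.succ) = E
    field_simp
  rw [Finset.sum_congr rfl hsum, ← Finset.sum_div, Finset.sum_sub_distrib]
  have hP0 : (∏ j : Fin n, (b 0 - b j.succ.succ)) ≠ 0 :=
    Finset.prod_ne_zero_iff.mpr fun j _ => hne _ _ (by simp [Fin.ext_iff])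
  have hP1 : (∏ j : Fin n, (b 1 - b j.succ.succ)) ≠ 0 :=
    Finset.prod_ne_zero_iff.mpr fun j _ => hne _ _ (by simp [Fin.ext_iff])
  rw [show b 0 - b 1 = -(b 1 - b 0) by ring]
  generalize hd : b 1 - b 0 = d at *
  generalize (∏ j : Fin n, (b 0 - b j.succ.succ)) = P0 at *
  generalize (∏ j : Fin n, (b 1 - b j.succ.succ)) = P1 at *
  generalize (∑ x : Fin n, Real.exp (b x.succ.succ) /
      ((b x.succ.succ - b 1) * ∏ j ∈ univ.erase x, (b x.succ.succ - b j.succ.succ))) = S1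
  generalize (∑ x : Fin n, Real.exp (b x.succ.succ) /
      ((b x.succ.succ - b 0) * ∏ j ∈ univ.erase x, (b x.succ.succ - b j.succ.succ))) = S0
  generalize Real.exp (b 0) = E0
  generalize Real.exp (b 1) = E1
  field_simp
  ring


def Tset (n : ℕ) : Set (Fin n → ℝ) := {x | (∀ i, 0 ≤ x i) ∧ ∑ i, x i ≤ 1}

lemma isClosed_Tset (n : ℕ) : IsClosed (Tset n) := by
  have h1 : IsClosed {x : Fin n → ℝ | ∀ i, 0 ≤ x i} := by
    have : {x : Fin n → ℝ | ∀ i, 0 ≤ x i} = ⋂ i, {x | 0 ≤ x i} := by ext; simp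
    rw [this]
    exact isClosed_iInter fun i => isClosed_le continuous_const (continuous_apply i)
  have h2 : IsClosed {x : Fin n → ℝ | ∑ i, x i ≤ 1} :=
    isClosed_le (continuous_finset_sum univ fun i _ => continuous_apply i) continuous_const
  exact h1.inter h2

lemma Tset_subset_Icc (n : ℕ) : Tset n ⊆ Set.Icc 0 1 := by
  rintro x ⟨hx, hs⟩
  exact ⟨fun i => hx i, fun i =>
    le_trans (Finset.single_le_sum (fun j _ => hx j) (mem_univ i)) hs⟩

lemma isCompact_Tset (n : ℕ) : IsCompact (Tset n) :=
  IsCompact.of_isClosed_subset isCompact_Icc (isClosed_Tset n) (Tset_subset_Icc n)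

lemma measurableSet_Tset (n : ℕ) : MeasurableSet (Tset n) := (isClosed_Tset n).measurableSet

def Sset (n : ℕ) : Set (ℝ × (Fin n → ℝ)) :=
  {p | (0 ≤ p.1 ∧ ∀ i, 0 ≤ p.2 i) ∧ p.1 + ∑ i, p.2 i ≤ 1}

lemma isClosed_Sset (n : ℕ) : IsClosed (Sset n) := by
  have h1 : IsClosed {p : ℝ × (Fin n → ℝ) | 0 ≤ p.1} :=
    isClosed_le continuous_const continuous_fst
  have h2 : IsClosed {p : ℝ × (Fin n → ℝ) | ∀ i, 0 ≤ p.2 i} := by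
    have : {p : ℝ × (Fin n → ℝ) | ∀ i, 0 ≤ p.2 i} = ⋂ i, {p | 0 ≤ p.2 i} := by ext; simp
    rw [this]
    exact isClosed_iInter fun i =>
      isClosed_le continuous_const ((continuous_apply i).comp continuous_snd)
  have h3 : IsClosed {p : ℝ × (Fin n → ℝ) | p.1 + ∑ i, p.2 i ≤ 1} :=
    isClosed_le (continuous_fst.add
      (continuous_finset_sum univ fun i _ => (continuous_apply i).comp continuous_snd))
      continuous_const
  exact (h1.inter h2).inter h3

lemma isCompact_Sset (n : ℕ) : IsCompact (Sset n) := by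
  refine IsCompact.of_isClosed_subset
    ((isCompact_Icc (a := (0:ℝ)) (b := 1)).prod (isCompact_Icc (a := (0:Fin n → ℝ)) (b := 1)))
    (isClosed_Sset n) ?_
  rintro ⟨s, y⟩ ⟨⟨hs, hy⟩, hsum⟩
  have hys : 0 ≤ ∑ i, y i := Finset.sum_nonneg fun i _ => hy i
  constructor
  · exact ⟨hs, by linarith⟩
  · refine ⟨fun i => hy i, fun i => ?_⟩
    have := Finset.single_le_sum (fun j _ => hy j) (mem_univ i)
    simp only [Pi.one_apply]
    linarith

lemma measurableSet_Sset (n : ℕ) : MeasurableSet (Sset n) := (isClosed_Sset n).measurableSet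

lemma simplex_exp_integral : ∀ (n : ℕ) (b : Fin (n+1) → ℝ), Function.Injective b →
    ∫ x in Tset n, Real.exp ((1 - ∑ i, x i) * b 0 + ∑ i, x i * b i.succ)
    = ∑ i, Real.exp (b i) / ∏ j ∈ univ.erase i, (b i - b j) := by
  intro n
  induction n with
  | zero =>
    intro b _
    have hT : Tset 0 = Set.univ := by ext x; simp [Tset]
    rw [hT, Measure.restrict_univ, MeasureTheory.integral_unique]
    simp [MeasureTheory.volume_pi, MeasureTheory.Measure.pi_univ]
    simp [measureReal_def, MeasureTheory.Measure.pi_univ]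
  | succ n IH =>
    intro b hb
    have hne : ∀ i j : Fin (n+2), i ≠ j → b i - b j ≠ 0 := fun i j h =>
      sub_ne_zero.mpr (fun hh => h (hb hh))
    have h10 : b 1 - b 0 ≠ 0 := hne 1 0 (by simp [Fin.ext_iff])
    set G : ℝ × (Fin n → ℝ) → ℝ := fun p =>
      Real.exp ((1 - (p.1 + ∑ i, p.2 i)) * b 0 + (p.1 * b 1 + ∑ i, p.2 i * b i.succ.succ))
      with hG
    have hGcont : Continuous G := by
      apply Real.continuous_exp.comp
      apply Continuous.add
      · exact (continuous_const.sub (continuous_fst.add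
          (continuous_finset_sum univ fun i _ => (continuous_apply i).comp continuous_snd))).mul
          continuous_const
      · exact (continuous_fst.mul continuous_const).add
          (continuous_finset_sum univ fun i _ =>
            ((continuous_apply i).comp continuous_snd).mul continuous_const)
    have hint : IntegrableOn G (Sset n) volume :=
      hGcont.continuousOn.integrableOn_compact (isCompact_Sset n)
    have hind : Integrable ((Sset n).indicator G) volume :=
      (integrable_indicator_iff (measurableSet_Sset n)).mpr hint
    -- change of variables
    have key := ((MeasureTheory.volume_preserving_piFinSuccAbove
        (fun _ : Fin (n+1) => ℝ) 0).symm _).setIntegral_preimage_emb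
      (MeasurableEquiv.piFinSuccAbove (fun _ : Fin (n+1) => ℝ) 0).symm.measurableEmbedding
      (fun x => Real.exp ((1 - ∑ i, x i) * b 0 + ∑ i, x i * b i.succ)) (Tset (n+1))
    have hsymm : ∀ p : ℝ × (Fin n → ℝ),
        (MeasurableEquiv.piFinSuccAbove (fun _ : Fin (n+1) => ℝ) 0).symm p
          = Fin.cons p.1 p.2 := fun p => by
      simp [MeasurableEquiv.piFinSuccAbove, Fin.insertNth_zero, Fin.consEquiv]
    have hpre : (MeasurableEquiv.piFinSuccAbove (fun _ : Fin (n+1) => ℝ) 0).symm ⁻¹'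
        (Tset (n+1)) = Sset n := by
      ext p
      simp only [Set.mem_preimage, hsymm, Tset, Sset, Set.mem_setOf_eq,
        Fin.forall_fin_succ, Fin.cons_zero, Fin.cons_succ, Fin.sum_cons]
    have hfun : ∀ p : ℝ × (Fin n → ℝ),
        Real.exp ((1 - ∑ i, (Fin.cons p.1 p.2 : Fin (n+1) → ℝ) i) * b 0
          + ∑ i, (Fin.cons p.1 p.2 : Fin (n+1) → ℝ) i * b i.succ) = G p := fun p => by
      simp only [hG, Fin.sum_cons, Fin.sum_univ_succ, Fin.cons_zero, Fin.cons_succ,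
        Fin.succ_zero_eq_one]
    rw [← key, hpre]
    have : (fun p : ℝ × (Fin n → ℝ) => Real.exp
        ((1 - ∑ i, ((MeasurableEquiv.piFinSuccAbove (fun _ : Fin (n+1) => ℝ) 0).symm p) i) * b 0
          + ∑ i, ((MeasurableEquiv.piFinSuccAbove (fun _ : Fin (n+1) => ℝ) 0).symm p) i * b i.succ))
        = G := by
      funext p; rw [hsymm p]; exact hfun p
    rw [show (∫ p in Sset n, Real.exp
        ((1 - ∑ i, ((MeasurableEquiv.piFinSuccAbove (fun _ : Fin (n+1) => ℝ) 0).symm p) i) * b 0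
          + ∑ i, ((MeasurableEquiv.piFinSuccAbove (fun _ : Fin (n+1) => ℝ) 0).symm p) i * b i.succ))
        = ∫ p in Sset n, G p from by rw [this]]
    -- now Fubini
    rw [← integral_indicator (measurableSet_Sset n), Measure.volume_eq_prod,
      MeasureTheory.integral_prod_symm _ (by rwa [← Measure.volume_eq_prod])]
    have hout : (fun y : Fin n → ℝ => ∫ s : ℝ, (Sset n).indicator G (s, y))
        = (Tset n).indicator (fun y => ∫ s in Set.Icc 0 (1 - ∑ i, y i), G (s, y)) := by
      funext y
      by_cases hy : y ∈ Tset n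
      · rw [Set.indicator_of_mem hy, ← integral_indicator measurableSet_Icc]
        congr 1
        funext s
        have hiff : (s, y) ∈ Sset n ↔ s ∈ Set.Icc 0 (1 - ∑ i, y i) := by
          obtain ⟨hy0, hy1⟩ := hy
          constructor
          · rintro ⟨⟨hs0, -⟩, hsum⟩
            exact ⟨hs0, by linarith⟩
          · rintro ⟨hs0, hs1⟩
            exact ⟨⟨hs0, hy0⟩, by linarith⟩
        by_cases hmem : s ∈ Set.Icc 0 (1 - ∑ i, y i)
        · rw [Set.indicator_of_mem hmem, Set.indicator_of_mem (hiff.mpr hmem)]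
        · rw [Set.indicator_of_notMem hmem,
            Set.indicator_of_notMem (fun h => hmem (hiff.mp h))]
      · rw [Set.indicator_of_notMem hy]
        have hz : ∀ s : ℝ, (Sset n).indicator G (s, y) = 0 := by
          intro s
          apply Set.indicator_of_notMem
          rintro ⟨⟨hs0, hy0⟩, hsum⟩
          exact hy ⟨hy0, by linarith⟩
        simp [hz]
    rw [hout, integral_indicator (measurableSet_Tset n)]
    have hinner : ∀ y ∈ Tset n, (∫ s in Set.Icc 0 (1 - ∑ i, y i), G (s, y))
        = (Real.exp ((1 - ∑ i, y i) * b 1 + ∑ i, y i * b i.succ.succ)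
          - Real.exp ((1 - ∑ i, y i) * b 0 + ∑ i, y i * b i.succ.succ)) / (b 1 - b 0) := by
      intro y hy
      have hr : (0:ℝ) ≤ 1 - ∑ i, y i := sub_nonneg.mpr hy.2
      have hGs : ∀ s, G (s, y) = Real.exp ((1 - ∑ i, y i) * b 0 + ∑ i, y i * b i.succ.succ)
          * Real.exp ((b 1 - b 0) * s) := by
        intro s
        simp only [hG]
        rw [← Real.exp_add]
        congr 1
        ring
      simp only [hGs]
      rw [MeasureTheory.integral_const_mul, integral_Icc_eq_integral_Ioc,
        ← intervalIntegral.integral_of_le hr,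
        intervalIntegral.integral_comp_mul_left Real.exp h10, mul_zero, integral_exp,
        Real.exp_zero, smul_eq_mul]
      have hsplit : Real.exp ((1 - ∑ i, y i) * b 1 + ∑ i, y i * b i.succ.succ)
          = Real.exp ((1 - ∑ i, y i) * b 0 + ∑ i, y i * b i.succ.succ)
            * Real.exp ((b 1 - b 0) * (1 - ∑ i, y i)) := by
        rw [← Real.exp_add]; congr 1; ring
      rw [hsplit]
      field_simp
    rw [setIntegral_congr_fun (measurableSet_Tset n) hinner]
    have hcont1 : Continuous (fun y : Fin n → ℝ =>
        Real.exp ((1 - ∑ i, y i) * b 1 + ∑ i, y i * b i.succ.succ)) := by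
      apply Real.continuous_exp.comp
      exact ((continuous_const.sub (continuous_finset_sum univ fun i _ =>
        continuous_apply i)).mul continuous_const).add
        (continuous_finset_sum univ fun i _ => (continuous_apply i).mul continuous_const)
    have hcont0 : Continuous (fun y : Fin n → ℝ =>
        Real.exp ((1 - ∑ i, y i) * b 0 + ∑ i, y i * b i.succ.succ)) := by
      apply Real.continuous_exp.comp
      exact ((continuous_const.sub (continuous_finset_sum univ fun i _ =>
        continuous_apply i)).mul continuous_const).add
        (continuous_finset_sum univ fun i _ => (continuous_apply i).mul continuous_const)
    have hI1 : IntegrableOn (fun y : Fin n → ℝ =>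
        Real.exp ((1 - ∑ i, y i) * b 1 + ∑ i, y i * b i.succ.succ)) (Tset n) volume :=
      hcont1.continuousOn.integrableOn_compact (isCompact_Tset n)
    have hI0 : IntegrableOn (fun y : Fin n → ℝ =>
        Real.exp ((1 - ∑ i, y i) * b 0 + ∑ i, y i * b i.succ.succ)) (Tset n) volume :=
      hcont0.continuousOn.integrableOn_compact (isCompact_Tset n)
    rw [MeasureTheory.integral_div, MeasureTheory.integral_sub hI1 hI0]
    have htail : Function.Injective (Fin.tail b) := fun i j h =>
      Fin.succ_injective _ (hb h)
    have hm : Function.Injective (fun i : Fin (n+1) =>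
        (Fin.cases 0 (fun k => k.succ.succ) i : Fin (n+2))) := by
      intro i j h
      induction i using Fin.cases <;> induction j using Fin.cases <;>
        simp_all [Fin.ext_iff] <;> omega
    have hfn : Fin.cons (b 0) (Fin.tail (Fin.tail b))
        = b ∘ (fun i : Fin (n+1) => (Fin.cases 0 (fun k => k.succ.succ) i : Fin (n+2))) := by
      funext i
      refine Fin.cases rfl (fun k => rfl) i
    have hcons : Function.Injective (Fin.cons (b 0) (Fin.tail (Fin.tail b))) := by
      rw [hfn]; exact hb.comp hm
    have e1 := IH (Fin.tail b) htail
    have e0 := IH (Fin.cons (b 0) (Fin.tail (Fin.tail b))) hcons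
    rw [Drec b hb, ← e1, ← e0]
    congr 1

/-- Laplace transform of the shifted volume function `g(t) = f(t + t*)`, where
`f(t) = vol(Δ ∩ {x : ⟨a,x⟩ ≤ t})`, the weights `a₀ := 0, a₁, …, aₙ` are
pairwise distinct, at least one of them is negative, and
`t* = min₀≤ᵢ≤ₙ aᵢ`. -/
theorem laplace_transform_shifted_section_volume (n : ℕ) (a : Fin n → ℝ)
    (A : Fin (n + 1) → ℝ) (hA : A = Fin.cons 0 a)
    (hdist : ∀ i j : Fin (n + 1), i ≠ j → A i ≠ A j)
    (hneg : ∃ i, a i < 0)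
    (tstar : ℝ) (htstar : tstar = univ.inf' univ_nonempty A)
    (f g : ℝ → ℝ)
    (hf : ∀ t, f t = (volume {x : Fin n → ℝ |
        ((∀ i, 0 ≤ x i) ∧ ∑ i, x i ≤ 1) ∧ ∑ i, a i * x i ≤ t}).toReal)
    (hg : ∀ t, g t = f (t + tstar))
    (l : ℝ) (hl : 0 < l) :
    ∫ t in Set.Ioi (0 : ℝ), Real.exp (-(l * t)) * g t =
      ∑ i : Fin (n + 1),
        Real.exp (-(l * (A i - tstar))) /
          (l ^ (n + 1) * ∏ j ∈ univ.erase i, (A j - A i)) := by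
  have hl0 : l ≠ 0 := ne_of_gt hl
  have hA0 : A 0 = 0 := by rw [hA]; rfl
  have hAs : ∀ i : Fin n, A i.succ = a i := fun i => by rw [hA]; simp
  have htle : ∀ i, tstar ≤ A i := fun i => htstar ▸ Finset.inf'_le _ (mem_univ i)
  have ht0 : tstar ≤ 0 := le_trans (htle 0) (le_of_eq hA0)
  set St : ℝ → Set (Fin n → ℝ) := fun s => {x | x ∈ Tset n ∧ ∑ i, a i * x i ≤ s} with hSt
  have hsumcont : Continuous (fun x : Fin n → ℝ => ∑ i, a i * x i) :=
    continuous_finset_sum univ fun i _ => continuous_const.mul (continuous_apply i)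
  have hStclosed : ∀ s, IsClosed (St s) := fun s =>
    (isClosed_Tset n).inter (isClosed_le hsumcont continuous_const)
  have hStm : ∀ s, MeasurableSet (St s) := fun s => (hStclosed s).measurableSet
  have hStfin : ∀ s, volume (St s) ≠ ⊤ := fun s =>
    ne_top_of_le_ne_top (isCompact_Tset n).measure_lt_top.ne
      (measure_mono fun x hx => hx.1)
  have hg2 : ∀ t, g t = (volume (St (t + tstar))).toReal := fun t => by
    rw [hg, hf]; rfl
  have hcnn : ∀ x ∈ Tset n, 0 ≤ ∑ i, a i * x i - tstar := by
    rintro x ⟨hx0, hx1⟩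
    have h1 : tstar * ∑ i, x i ≤ ∑ i, a i * x i := by
      rw [Finset.mul_sum]
      refine Finset.sum_le_sum fun i _ => ?_
      have : tstar ≤ a i := (hAs i) ▸ htle i.succ
      exact mul_le_mul_of_nonneg_right this (hx0 i)
    have hsnn : 0 ≤ ∑ i, x i := Finset.sum_nonneg fun i _ => hx0 i
    nlinarith
  -- measurability of g
  have hmono : Monotone fun t => volume (St t) := fun s t hst =>
    measure_mono fun x hx => ⟨hx.1, le_trans hx.2 hst⟩
  have hmeasvol : Measurable fun t => volume (St t) := hmono.measurable
  have hgmeas : Measurable g := by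
    have : Measurable fun t => (volume (St (t + tstar))).toReal :=
      ENNReal.measurable_toReal.comp (hmeasvol.comp (measurable_id.add_const tstar))
    have heq : g = fun t => (volume (St (t + tstar))).toReal := funext hg2
    rw [heq]
    exact this
  -- convert to lintegral
  have hintegrand_meas : Measurable fun t => Real.exp (-(l * t)) * g t := by
    have h1 : Measurable fun t : ℝ => Real.exp (-(l * t)) :=
      (Real.continuous_exp.comp ((continuous_const.mul continuous_id).neg)).measurable
    exact h1.mul hgmeas
  have hLHS : ∫ t in Set.Ioi (0:ℝ), Real.exp (-(l * t)) * g t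
      = (∫⁻ t in Set.Ioi (0:ℝ),
          ENNReal.ofReal (Real.exp (-(l * t))) * volume (St (t + tstar))).toReal := by
    rw [MeasureTheory.integral_eq_lintegral_of_nonneg_ae
      (Filter.Eventually.of_forall fun t => mul_nonneg (Real.exp_nonneg _)
        (by rw [hg2]; exact ENNReal.toReal_nonneg))
      hintegrand_meas.aestronglyMeasurable]
    congr 1
    refine MeasureTheory.lintegral_congr fun t => ?_
    rw [hg2 t, ENNReal.ofReal_mul (Real.exp_nonneg _),
      ENNReal.ofReal_toReal (hStfin _)]
  rw [hLHS]
  set E : Set (ℝ × (Fin n → ℝ)) := {p | p.2 ∈ Tset n ∧ ∑ i, a i * p.2 i ≤ p.1 + tstar}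
    with hE
  have hEclosed : IsClosed E := by
    have h1 : IsClosed {p : ℝ × (Fin n → ℝ) | p.2 ∈ Tset n} :=
      (isClosed_Tset n).preimage continuous_snd
    have h2 : IsClosed {p : ℝ × (Fin n → ℝ) | ∑ i, a i * p.2 i ≤ p.1 + tstar} :=
      isClosed_le (hsumcont.comp continuous_snd) (continuous_fst.add continuous_const)
    exact h1.inter h2
  have hEmeas : MeasurableSet E := hEclosed.measurableSet
  have step1 : (∫⁻ t in Set.Ioi (0:ℝ),
        ENNReal.ofReal (Real.exp (-(l * t))) * volume (St (t + tstar)))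
      = ∫⁻ t in Set.Ioi (0:ℝ), ∫⁻ x,
          ENNReal.ofReal (Real.exp (-(l * t))) * E.indicator (fun _ => 1) (t, x) := by
    refine lintegral_congr fun t => ?_
    rw [← MeasureTheory.lintegral_indicator_one (hStm (t + tstar)),
      ← MeasureTheory.lintegral_const_mul _ (measurable_one.indicator (hStm _))]
    refine lintegral_congr fun x => ?_
    congr 1
  have hswapmeas : AEMeasurable (Function.uncurry fun t (x : Fin n → ℝ) =>
      ENNReal.ofReal (Real.exp (-(l * t))) * E.indicator (fun _ => 1) (t, x))
      ((volume.restrict (Set.Ioi (0:ℝ))).prod volume) := by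
    refine Measurable.aemeasurable ?_
    have h1 : Measurable fun p : ℝ × (Fin n → ℝ) =>
        ENNReal.ofReal (Real.exp (-(l * p.1))) :=
      ENNReal.measurable_ofReal.comp
        (Real.continuous_exp.comp ((continuous_const.mul continuous_fst).neg)).measurable
    have h2 : Measurable fun p : ℝ × (Fin n → ℝ) =>
        E.indicator (fun _ => (1:ENNReal)) p := measurable_const.indicator hEmeas
    exact h1.mul h2
  rw [step1, MeasureTheory.lintegral_lintegral_swap hswapmeas]
  have hinner : ∀ x : Fin n → ℝ,
      (∫⁻ t in Set.Ioi (0:ℝ),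
        ENNReal.ofReal (Real.exp (-(l * t))) * E.indicator (fun _ => 1) (t, x))
      = (Tset n).indicator (fun x =>
          ENNReal.ofReal (Real.exp (-(l * (∑ i, a i * x i - tstar))) * l⁻¹)) x := by
    intro x
    by_cases hx : x ∈ Tset n
    · rw [Set.indicator_of_mem hx]
      have hc0 : 0 ≤ ∑ i, a i * x i - tstar := hcnn x hx
      have hEind : ∀ t, E.indicator (fun _ => (1:ENNReal)) (t, x)
          = (Set.Ici (∑ i, a i * x i - tstar)).indicator (fun _ => 1) t := by
        intro t
        have hiff : (t, x) ∈ E ↔ t ∈ Set.Ici (∑ i, a i * x i - tstar) := by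
          constructor
          · rintro ⟨-, hle⟩; simp only [Set.mem_Ici]; linarith
          · intro ht
            simp only [Set.mem_Ici] at ht
            exact ⟨hx, by linarith⟩
        by_cases hmem : t ∈ Set.Ici (∑ i, a i * x i - tstar)
        · rw [Set.indicator_of_mem (hiff.mpr hmem), Set.indicator_of_mem hmem]
        · rw [Set.indicator_of_notMem (fun h => hmem (hiff.mp h)),
            Set.indicator_of_notMem hmem]
      have e1 : (∫⁻ t in Set.Ioi (0:ℝ),
            ENNReal.ofReal (Real.exp (-(l * t))) * E.indicator (fun _ => 1) (t, x))
          = ∫⁻ t in Set.Ioi (0:ℝ), (Set.Ici (∑ i, a i * x i - tstar)).indicator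
              (fun t => ENNReal.ofReal (Real.exp (-(l * t)))) t := by
        refine lintegral_congr fun t => ?_
        rw [hEind t]
        by_cases hmem : t ∈ Set.Ici (∑ i, a i * x i - tstar)
        · rw [Set.indicator_of_mem hmem, Set.indicator_of_mem hmem, mul_one]
        · rw [Set.indicator_of_notMem hmem, Set.indicator_of_notMem hmem, mul_zero]
      have e2 : (∫⁻ t in Set.Ioi (0:ℝ), (Set.Ici (∑ i, a i * x i - tstar)).indicator
              (fun t => ENNReal.ofReal (Real.exp (-(l * t)))) t)
          = ∫⁻ t in Set.Ici (∑ i, a i * x i - tstar) ∩ Set.Ioi (0:ℝ),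
              ENNReal.ofReal (Real.exp (-(l * t))) := by
        rw [MeasureTheory.lintegral_indicator measurableSet_Ici,
          MeasureTheory.Measure.restrict_restrict measurableSet_Ici]
      have haeeq : (Set.Ici (∑ i, a i * x i - tstar) ∩ Set.Ioi (0:ℝ) : Set ℝ)
          =ᵐ[volume] Set.Ioi (∑ i, a i * x i - tstar) := by
        refine MeasureTheory.ae_eq_set.mpr ⟨?_, ?_⟩
        · refine measure_mono_null (fun t ht => ?_) (measure_singleton
            (∑ i, a i * x i - tstar))
          obtain ⟨⟨h1, h2⟩, h3⟩ := ht
          simp only [Set.mem_Ici] at h1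
          simp only [Set.mem_Ioi] at h3
          simp only [Set.mem_singleton_iff]
          linarith
        · have hdiff : Set.Ioi (∑ i, a i * x i - tstar) \
              (Set.Ici (∑ i, a i * x i - tstar) ∩ Set.Ioi (0:ℝ)) = ∅ :=
            Set.diff_eq_empty.mpr fun t ht =>
              ⟨Set.mem_Ici.mpr (le_of_lt ht), Set.mem_Ioi.mpr (lt_of_le_of_lt hc0 ht)⟩
          rw [hdiff]
          simp
      have e3 : (∫⁻ t in Set.Ici (∑ i, a i * x i - tstar) ∩ Set.Ioi (0:ℝ),
              ENNReal.ofReal (Real.exp (-(l * t))))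
          = ∫⁻ t in Set.Ioi (∑ i, a i * x i - tstar),
              ENNReal.ofReal (Real.exp (-(l * t))) :=
        MeasureTheory.setLIntegral_congr haeeq
      have e4 : (∫⁻ t in Set.Ioi (∑ i, a i * x i - tstar),
              ENNReal.ofReal (Real.exp (-(l * t))))
          = ENNReal.ofReal (Real.exp (-(l * (∑ i, a i * x i - tstar))) * l⁻¹) := by
        have hnm : ∀ t : ℝ, -(l * t) = -l * t := fun t => (neg_mul l t).symm
        simp only [hnm]
        rw [← MeasureTheory.ofReal_integral_eq_lintegral_ofReal
          (exp_neg_integrableOn_Ioi _ hl)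
          (Filter.Eventually.of_forall fun t => Real.exp_nonneg _)]
        congr 1
        simp only [neg_mul]
        rw [MeasureTheory.integral_comp_mul_left_Ioi (fun u => Real.exp (-u)) _ hl,
          integral_exp_neg_Ioi, smul_eq_mul]
        ring
      rw [e1, e2, e3, e4]
    · rw [Set.indicator_of_notMem hx]
      have hz : ∀ t, E.indicator (fun _ => (1:ENNReal)) (t, x) = 0 := fun t =>
        Set.indicator_of_notMem (fun h => hx h.1) _
      simp [hz]
  rw [lintegral_congr hinner,
    MeasureTheory.lintegral_indicator (measurableSet_Tset n),
    ← MeasureTheory.ofReal_integral_eq_lintegral_ofReal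
      ((Continuous.continuousOn (by
        apply Continuous.mul
        · exact Real.continuous_exp.comp ((continuous_const.mul
            (hsumcont.sub continuous_const)).neg)
        · exact continuous_const)).integrableOn_compact (isCompact_Tset n))
      (Filter.Eventually.of_forall fun x =>
        mul_nonneg (Real.exp_nonneg _) (inv_nonneg.mpr (le_of_lt hl))),
    ENNReal.toReal_ofReal (MeasureTheory.integral_nonneg fun x =>
      mul_nonneg (Real.exp_nonneg _) (inv_nonneg.mpr (le_of_lt hl)))]
  set b : Fin (n+1) → ℝ := fun i => -(l * A i) with hb
  have hbinj : Function.Injective b := by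
    intro i j h
    by_contra hij
    exact hdist i j hij (mul_left_cancel₀ hl0 (neg_injective h))
  have hexp : ∀ x ∈ Tset n, Real.exp (-(l * (∑ i, a i * x i - tstar))) * l⁻¹
      = (Real.exp (l * tstar) * l⁻¹)
        * Real.exp ((1 - ∑ i, x i) * b 0 + ∑ i, x i * b i.succ) := by
    intro x _
    have hb0 : b 0 = 0 := by simp [hb, hA0]
    have hbs : ∀ i : Fin n, b i.succ = -(l * a i) := fun i => by simp [hb, hAs]
    simp only [hb0, hbs, mul_zero, zero_add]
    have hsum : ∑ i, x i * -(l * a i) = -(l * ∑ i, a i * x i) := by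
      rw [Finset.mul_sum, ← Finset.sum_neg_distrib]
      exact Finset.sum_congr rfl fun i _ => by ring
    rw [hsum, show Real.exp (-(l * (∑ i, a i * x i - tstar)))
        = Real.exp (l * tstar) * Real.exp (-(l * ∑ i, a i * x i)) by
      rw [← Real.exp_add]; congr 1; ring]
    ring
  rw [setIntegral_congr_fun (measurableSet_Tset n) fun x hx => hexp x hx,
    MeasureTheory.integral_const_mul, simplex_exp_integral n b hbinj, Finset.mul_sum]
  refine Finset.sum_congr rfl fun i _ => ?_
  have hfac : ∀ j, b i - b j = l * (A j - A i) := fun j => by simp only [hb]; ring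
  rw [Finset.prod_congr rfl fun j _ => hfac j, Finset.prod_mul_distrib,
    Finset.prod_const, Finset.card_erase_of_mem (mem_univ i), Finset.card_univ,
    Fintype.card_fin, Nat.add_sub_cancel]
  have hP : (∏ j ∈ univ.erase i, (A j - A i)) ≠ 0 :=
    Finset.prod_ne_zero_iff.mpr fun j hj =>
      sub_ne_zero.mpr (hdist j i (Finset.ne_of_mem_erase hj))
  have hexp2 : Real.exp (-(l * (A i - tstar)))
      = Real.exp (l * tstar) * Real.exp (b i) := by
    rw [← Real.exp_add]
    simp only [hb]
    congr 1
    ring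
  rw [hexp2, pow_succ]
  have hln : (l:ℝ)^n ≠ 0 := pow_ne_zero n hl0
  field_simp
end
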